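/- arXiv:2506.14924 — 4 statements merged into one kernel-verified Lean document; each statement's English description precedes it below -/
import Mathlib

section
/- Let E and F be real Banach spaces, E₀ a closed subspace of E, and T : E₀ → F a bounded linear operator. If there exists a Lipschitz function f : E → F with f|_{E₀} = T, then there exists a bounded linear operator R : E → F'' (into the bidual of F) such that R(x) = k_F(T x) for all x ∈ E₀ (where k_F : F → F'' is the canonical embedding) and ‖R‖ ≤ Lip(f). -/
open NormedSpace

section InvariantMean

open Set Pointwise

variable {G : Type*} [AddCommGroup G]

/-- The submodule of bounded real-valued functions on `G`. -/
def BddFun (G : Type*) [AddCommGroup G] : Submodule ℝ (G → ℝ) where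
  carrier := {φ | ∃ C, ∀ x, |φ x| ≤ C}
  add_mem' := by
    rintro φ ψ ⟨C, hC⟩ ⟨D, hD⟩
    exact ⟨C + D, fun x => (abs_add_le _ _).trans (add_le_add (hC x) (hD x))⟩
  zero_mem' := ⟨0, fun x => by simp⟩
  smul_mem' := by
    rintro c φ ⟨C, hC⟩
    refine ⟨|c| * C, fun x => ?_⟩
    have : |c * φ x| = |c| * |φ x| := abs_mul _ _
    simpa [this] using mul_le_mul_of_nonneg_left (hC x) (abs_nonneg c)

/-- Sup over translates of the average of `φ` along the finite family `g`. -/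
noncomputable def avgA {n : ℕ} (g : Fin n → G) (φ : G → ℝ) : ℝ :=
  sSup (Set.range fun h => (∑ i, φ (h + g i)) / n)

def avgSet (φ : G → ℝ) : Set ℝ :=
  {r | ∃ n : ℕ, 0 < n ∧ ∃ g : Fin n → G, r = avgA g φ}

noncomputable def meanP (φ : G → ℝ) : ℝ := sInf (avgSet φ)

lemma bddAbove_avg {n : ℕ} (g : Fin n → G) {φ : G → ℝ} {C : ℝ}
    (hC : ∀ x, φ x ≤ C) :
    BddAbove (Set.range fun h => (∑ i, φ (h + g i)) / n) := by
  rcases Nat.eq_zero_or_pos n with rfl | hn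
  · exact ⟨0, by rintro r ⟨h, rfl⟩; simp⟩
  refine ⟨C, ?_⟩
  rintro r ⟨h, rfl⟩
  rw [div_le_iff₀ (by positivity)]
  calc (∑ i, φ (h + g i)) ≤ ∑ _i : Fin n, C := Finset.sum_le_sum fun i _ => hC _
    _ = C * n := by simp [mul_comm]

lemma avgA_le {n : ℕ} (hn : 0 < n) (g : Fin n → G) {φ : G → ℝ} {C : ℝ}
    (hC : ∀ x, φ x ≤ C) : avgA g φ ≤ C := by
  apply csSup_le ⟨_, Set.mem_range_self (0 : G)⟩
  rintro r ⟨h, rfl⟩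
  rw [div_le_iff₀ (by positivity)]
  calc (∑ i, φ (h + g i)) ≤ ∑ _i : Fin n, C := Finset.sum_le_sum fun i _ => hC _
    _ = C * n := by simp [mul_comm]

lemma neg_le_avgA {n : ℕ} (hn : 0 < n) (g : Fin n → G) {φ : G → ℝ} {C : ℝ}
    (hC : ∀ x, |φ x| ≤ C) : -C ≤ avgA g φ := by
  have h0 : -C ≤ (∑ i, φ ((0 : G) + g i)) / n := by
    rw [le_div_iff₀ (by positivity)]
    calc -C * n = ∑ _i : Fin n, -C := by simp [mul_comm]
      _ ≤ _ := Finset.sum_le_sum fun i _ => (abs_le.1 (hC _)).1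
  exact h0.trans (le_csSup (bddAbove_avg g fun x => (abs_le.1 (hC x)).2) ⟨0, rfl⟩)

lemma avgSet_nonempty (φ : G → ℝ) : (avgSet φ).Nonempty :=
  ⟨avgA (fun _ : Fin 1 => (0 : G)) φ, 1, one_pos, _, rfl⟩

lemma bddBelow_avgSet {φ : G → ℝ} {C : ℝ} (hC : ∀ x, |φ x| ≤ C) :
    BddBelow (avgSet φ) := by
  refine ⟨-C, ?_⟩
  rintro r ⟨n, hn, g, rfl⟩
  exact neg_le_avgA hn g hC

lemma meanP_le {φ : G → ℝ} {C D : ℝ} (hC : ∀ x, |φ x| ≤ C) (hD : ∀ x, φ x ≤ D) :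
    meanP φ ≤ D :=
  (csInf_le (bddBelow_avgSet hC) ⟨1, one_pos, fun _ => 0, rfl⟩).trans
    (avgA_le one_pos _ hD)

lemma neg_le_meanP {φ : G → ℝ} {C : ℝ} (hC : ∀ x, |φ x| ≤ C) : -C ≤ meanP φ :=
  le_csInf (avgSet_nonempty φ) (by rintro r ⟨n, hn, g, rfl⟩; exact neg_le_avgA hn g hC)

lemma sum_le_avgA {n : ℕ} (hn : 0 < n) (g : Fin n → G) {φ : G → ℝ} {C : ℝ}
    (hC : ∀ x, φ x ≤ C) (h' : G) :
    (∑ i, φ (h' + g i)) ≤ n * avgA g φ := by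
  have h1 : (∑ i, φ (h' + g i)) / n ≤ avgA g φ :=
    le_csSup (bddAbove_avg g hC) ⟨h', rfl⟩
  rw [div_le_iff₀ (by positivity : (0:ℝ) < n)] at h1
  linarith [h1]

lemma meanP_add_le {φ ψ : G → ℝ} (hφ : ∃ C, ∀ x, |φ x| ≤ C)
    (hψ : ∃ C, ∀ x, |ψ x| ≤ C) :
    meanP (φ + ψ) ≤ meanP φ + meanP ψ := by
  obtain ⟨C, hC⟩ := hφ
  obtain ⟨D, hD⟩ := hψ
  have key : ∀ a ∈ avgSet φ, ∀ b ∈ avgSet ψ, meanP (φ + ψ) ≤ a + b := by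
    rintro a ⟨n, hn, g, rfl⟩ b ⟨m, hm, k, rfl⟩
    set e : Fin n × Fin m ≃ Fin (n * m) := finProdFinEquiv
    set g' : Fin (n * m) → G := fun i => g (e.symm i).1 + k (e.symm i).2 with hg'
    have hnm : 0 < n * m := Nat.mul_pos hn hm
    have hAle : avgA g' (φ + ψ) ≤ avgA g φ + avgA k ψ := by
      apply csSup_le ⟨_, Set.mem_range_self (0 : G)⟩
      rintro r ⟨h, rfl⟩
      have hsum : (∑ i, (φ + ψ) (h + g' i))
          = (∑ p : Fin n × Fin m, φ (h + g p.1 + k p.2))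
            + (∑ p : Fin n × Fin m, ψ (h + g p.1 + k p.2)) := by
        rw [← Equiv.sum_comp e (fun i => (φ + ψ) (h + g' i)), ← Finset.sum_add_distrib]
        refine Finset.sum_congr rfl fun p _ => ?_
        simp only [hg', Equiv.symm_apply_apply, Pi.add_apply, add_assoc]
      have hA : (∑ p : Fin n × Fin m, φ (h + g p.1 + k p.2))
          ≤ m * (n * avgA g φ) := by
        rw [Fintype.sum_prod_type, Finset.sum_comm]
        calc (∑ j : Fin m, ∑ i : Fin n, φ (h + g i + k j))
            ≤ ∑ _j : Fin m, (n * avgA g φ) := by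
              refine Finset.sum_le_sum fun j _ => ?_
              have := sum_le_avgA hn g (fun x => (abs_le.1 (hC x)).2) (h + k j)
              refine le_trans (le_of_eq ?_) this
              refine Finset.sum_congr rfl fun i _ => ?_
              congr 1
              abel
          _ = m * (n * avgA g φ) := by simp [mul_comm]
      have hB : (∑ p : Fin n × Fin m, ψ (h + g p.1 + k p.2))
          ≤ n * (m * avgA k ψ) := by
        rw [Fintype.sum_prod_type]
        calc (∑ i : Fin n, ∑ j : Fin m, ψ (h + g i + k j))
            ≤ ∑ _i : Fin n, (m * avgA k ψ) := by
              refine Finset.sum_le_sum fun i _ => ?_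
              exact sum_le_avgA hm k (fun x => (abs_le.1 (hD x)).2) (h + g i)
          _ = n * (m * avgA k ψ) := by simp [mul_comm]
      dsimp only
      rw [hsum, div_le_iff₀ (by positivity : (0:ℝ) < ((n * m : ℕ) : ℝ))]
      push_cast
      nlinarith [hA, hB]
    have hmem : avgA g' (φ + ψ) ∈ avgSet (φ + ψ) := ⟨n * m, hnm, g', rfl⟩
    have hbdd : BddBelow (avgSet (φ + ψ)) :=
      bddBelow_avgSet (φ := φ + ψ) (C := C + D)
        (fun x => (abs_add_le _ _).trans (add_le_add (hC x) (hD x)))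
    exact (csInf_le hbdd hmem).trans hAle
  have step : ∀ a ∈ avgSet φ, meanP (φ + ψ) - a ≤ meanP ψ := fun a ha =>
    le_csInf (avgSet_nonempty ψ) fun b hb => by linarith [key a ha b hb]
  have : meanP (φ + ψ) - meanP ψ ≤ meanP φ :=
    le_csInf (avgSet_nonempty φ) fun a ha => by linarith [step a ha]
  linarith

lemma meanP_smul {c : ℝ} (hc : 0 < c) (φ : G → ℝ) :
    meanP (c • φ) = c * meanP φ := by
  have havg : ∀ (n : ℕ) (g : Fin n → G), avgA g (c • φ) = c * avgA g φ := by
    intro n g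
    unfold avgA
    rw [show (Set.range fun h => (∑ i, (c • φ) (h + g i)) / n)
        = c • (Set.range fun h => (∑ i, φ (h + g i)) / n) from ?_]
    · rw [Real.sSup_smul_of_nonneg hc.le]; rfl
    · rw [← Set.range_smul]
      refine congrArg _ (funext fun h => ?_)
      simp only [Pi.smul_apply, smul_eq_mul, ← Finset.mul_sum]
      ring
  have hset : avgSet (c • φ) = c • avgSet φ := by
    ext r
    constructor
    · rintro ⟨n, hn, g, rfl⟩
      exact ⟨avgA g φ, ⟨n, hn, g, rfl⟩, (havg n g).symm⟩
    · rintro ⟨s, ⟨n, hn, g, rfl⟩, rfl⟩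
      exact ⟨n, hn, g, (havg n g).symm⟩
  unfold meanP
  rw [hset, Real.sInf_smul_of_nonneg hc.le]
  rfl

lemma meanP_shift_sub {φ : G → ℝ} {C : ℝ} (hC : ∀ x, |φ x| ≤ C) (b : G) :
    meanP (fun h => φ (h + b) - φ h) ≤ 0 := by
  have key : ∀ n : ℕ, 0 < n → meanP (fun h => φ (h + b) - φ h) ≤ 2 * C / n := by
    intro n hn
    set g : Fin n → G := fun i => (i : ℕ) • b with hg
    have hmem : avgA g (fun h => φ (h + b) - φ h) ∈ avgSet (fun h => φ (h + b) - φ h) :=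
      ⟨n, hn, g, rfl⟩
    have hbdd : BddBelow (avgSet (fun h => φ (h + b) - φ h)) :=
      bddBelow_avgSet (C := C + C)
        (fun x => (abs_sub _ _).trans (add_le_add (hC _) (hC _)))
    refine (csInf_le hbdd hmem).trans ?_
    apply csSup_le ⟨_, Set.mem_range_self (0 : G)⟩
    rintro r ⟨h, rfl⟩
    have htel : (∑ i : Fin n, (φ (h + g i + b) - φ (h + g i)))
        = φ (h + n • b) - φ (h + 0 • b) := by
      rw [Fin.sum_univ_eq_sum_range (fun i => φ (h + i • b + b) - φ (h + i • b))]
      have := Finset.sum_range_sub (fun i => φ (h + i • b)) n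
      rw [← this]
      refine Finset.sum_congr rfl fun i _ => ?_
      congr 2
      rw [succ_nsmul]
      abel
    dsimp only
    have hnum : (∑ i : Fin n, (φ (h + g i + b) - φ (h + g i))) ≤ 2 * C := by
      rw [htel]
      linarith [(abs_le.1 (hC (h + n • b))).2, (abs_le.1 (hC (h + 0 • b))).1]
    have hnpos : (0:ℝ) < n := by positivity
    calc (∑ i : Fin n, (φ (h + g i + b) - φ (h + g i))) / n ≤ 2 * C / n := by gcongr
      _ = 2 * C / n := rfl
  by_contra hpos
  push_neg at hpos
  set p := meanP (fun h => φ (h + b) - φ h) with hp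
  obtain ⟨n, hn⟩ := exists_nat_gt (2 * C / p)
  have hC0 : (0:ℝ) ≤ C := le_trans (abs_nonneg _) (hC 0)
  have hdiv0 : (0:ℝ) ≤ 2 * C / p := by positivity
  have hn0R : (0:ℝ) < n := lt_of_le_of_lt hdiv0 hn
  have hn0 : 0 < n := by exact_mod_cast hn0R
  have h1 := key n hn0
  rw [div_lt_iff₀ hpos] at hn
  rw [le_div_iff₀ hn0R] at h1
  nlinarith

theorem exists_invariant_mean (G : Type*) [AddCommGroup G] :
    ∃ m : BddFun G →ₗ[ℝ] ℝ,
      (∀ (φ : BddFun G) (C : ℝ), (∀ x, |(φ : G → ℝ) x| ≤ C) → |m φ| ≤ C) ∧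
      (∀ (φ ψ : BddFun G) (b : G),
        (∀ h, (ψ : G → ℝ) h = (φ : G → ℝ) (h + b)) → m ψ = m φ) ∧
      (∀ (φ : BddFun G) (c : ℝ), (∀ h, (φ : G → ℝ) h = c) → m φ = c) := by
  obtain ⟨g, -, hg⟩ :=
    exists_extension_of_le_sublinear (⟨⊥, 0⟩ : (BddFun G) →ₗ.[ℝ] ℝ)
      (fun φ => meanP (φ : G → ℝ))
      (fun c hc φ => meanP_smul hc _)
      (fun φ ψ => meanP_add_le φ.2 ψ.2)
      (fun x => by
        obtain ⟨x, hx⟩ := x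
        simp only [Submodule.mem_bot] at hx
        subst hx
        simpa using neg_le_meanP (φ := ((0 : BddFun G) : G → ℝ)) (C := 0)
          (fun x => by simp))
  have hub : ∀ (φ : BddFun G) (D : ℝ) (C : ℝ), (∀ x, |(φ : G → ℝ) x| ≤ C) →
      (∀ x, (φ : G → ℝ) x ≤ D) → g φ ≤ D := fun φ D C hC hD =>
    (hg φ).trans (meanP_le hC hD)
  refine ⟨g, ?_, ?_, ?_⟩
  · intro φ C hC
    rw [abs_le]
    constructor
    · have h2 : g (-φ) ≤ C := by
        apply hub (-φ) C C
        · intro x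
          have hcoe : ((-φ : BddFun G) : G → ℝ) x = -((φ : G → ℝ) x) := rfl
          rw [hcoe, abs_neg]; exact hC x
        · intro x
          have hcoe : ((-φ : BddFun G) : G → ℝ) x = -((φ : G → ℝ) x) := rfl
          rw [hcoe]; linarith [(abs_le.1 (hC x)).1]
      rw [map_neg] at h2
      linarith
    · exact hub φ C C hC fun x => (abs_le.1 (hC x)).2
  · intro φ ψ b hψ
    obtain ⟨C, hC⟩ := φ.2
    have h1 : g (ψ - φ) ≤ 0 := by
      refine (hg _).trans ?_
      have : ((ψ - φ : BddFun G) : G → ℝ) = fun h => (φ : G → ℝ) (h + b) - (φ : G → ℝ) h := by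
        funext x
        simp [hψ x]
      rw [this]
      exact meanP_shift_sub hC b
    have h2 : g (φ - ψ) ≤ 0 := by
      refine (hg _).trans ?_
      have hψC : ∀ x, |(ψ : G → ℝ) x| ≤ C := fun x => by rw [hψ x]; exact hC _
      have : ((φ - ψ : BddFun G) : G → ℝ)
          = fun h => (ψ : G → ℝ) (h + -b) - (ψ : G → ℝ) h := by
        funext x
        have hcoe : ((φ - ψ : BddFun G) : G → ℝ) x = (φ : G → ℝ) x - (ψ : G → ℝ) x := rfl
        rw [hcoe, hψ (x + -b), neg_add_cancel_right]
      rw [this]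
      exact meanP_shift_sub hψC (-b)
    rw [map_sub] at h1 h2
    linarith
  · intro φ c hc
    have habs : ∀ x, |(φ : G → ℝ) x| ≤ |c| := fun x => by rw [hc x]
    have h1 : g φ ≤ c := hub φ c |c| habs fun x => (hc x).le
    have h2 : g (-φ) ≤ -c := by
      apply hub (-φ) (-c) |c|
      · intro x
        have hcoe : ((-φ : BddFun G) : G → ℝ) x = -((φ : G → ℝ) x) := rfl
        rw [hcoe, abs_neg]; exact habs x
      · intro x
        have hcoe : ((-φ : BddFun G) : G → ℝ) x = -((φ : G → ℝ) x) := rfl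
        rw [hcoe, hc x]
    rw [map_neg] at h2
    linarith

end InvariantMean
section MeanHelpers

variable {G : Type*} [AddCommGroup G]

lemma mean_congr (m : BddFun G →ₗ[ℝ] ℝ) {φ ψ : BddFun G}
    (h : ∀ x, (φ : G → ℝ) x = (ψ : G → ℝ) x) : m φ = m ψ := by
  congr 1
  exact Subtype.ext (funext h)

lemma mean_split (m : BddFun G →ₗ[ℝ] ℝ) {χ φ ψ : BddFun G}
    (h : ∀ x, (χ : G → ℝ) x = (φ : G → ℝ) x + (ψ : G → ℝ) x) :
    m χ = m φ + m ψ := by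
  have : χ = φ + ψ := Subtype.ext (funext h)
  rw [this, map_add]

lemma mean_smul_split (m : BddFun G →ₗ[ℝ] ℝ) {χ φ : BddFun G} {c : ℝ}
    (h : ∀ x, (χ : G → ℝ) x = c * (φ : G → ℝ) x) : m χ = c * m φ := by
  have : χ = c • φ := Subtype.ext (funext h)
  rw [this, map_smul, smul_eq_mul]

lemma mean_split3 (m : BddFun G →ₗ[ℝ] ℝ) {χ φ ψ ω : BddFun G}
    (h : ∀ x, (χ : G → ℝ) x = (φ : G → ℝ) x - (ψ : G → ℝ) x + (ω : G → ℝ) x) :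
    m χ = m φ - m ψ + m ω := by
  have : χ = φ - ψ + ω := Subtype.ext (funext h)
  rw [this, map_add, map_sub]

end MeanHelpers

section Main

open NormedSpace

variable {E F : Type*} [NormedAddCommGroup E] [NormedSpace ℝ E]
  [NormedAddCommGroup F] [NormedSpace ℝ F]

lemma pt_bound {K : NNReal} {f : E → F} (hf : LipschitzWith K f)
    (y : StrongDual ℝ F) (a b : E) :
    |y (f a - f b)| ≤ ‖y‖ * (↑K * ‖a - b‖) := by
  have h1 : |y (f a - f b)| ≤ ‖y‖ * ‖f a - f b‖ := by
    have := y.le_opNorm (f a - f b)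
    rwa [Real.norm_eq_abs] at this
  refine h1.trans (mul_le_mul_of_nonneg_left ?_ (norm_nonneg y))
  have := hf.dist_le_mul a b
  rwa [dist_eq_norm, dist_eq_norm] at this

variable (E₀ : Subspace ℝ E) (K : NNReal) (f : E → F)

/-- The inner integrand: `k ↦ y (f (x + h + k) - f (h + k))` as a bounded function on `E₀`. -/
noncomputable def myInner (hf : LipschitzWith K f) (y : StrongDual ℝ F) (x h : E) :
    BddFun ↥E₀ :=
  ⟨fun k => y (f (x + h + (k : E)) - f (h + (k : E))),
    ⟨‖y‖ * (↑K * ‖x‖), fun k => by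
      have := pt_bound hf y (x + h + (k : E)) (h + (k : E))
      rwa [show x + h + (k : E) - (h + (k : E)) = x by abel] at this⟩⟩

noncomputable def myOuter (hf : LipschitzWith K f)
    (m₂ : BddFun ↥E₀ →ₗ[ℝ] ℝ)
    (hb₂ : ∀ (φ : BddFun ↥E₀) (C : ℝ), (∀ x, |(φ : ↥E₀ → ℝ) x| ≤ C) → |m₂ φ| ≤ C)
    (y : StrongDual ℝ F) (x : E) : BddFun E :=
  ⟨fun h => m₂ (myInner E₀ K f hf y x h),
    ⟨‖y‖ * (↑K * ‖x‖), fun h => hb₂ _ _ fun k => by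
      have := pt_bound hf y (x + h + (k : E)) (h + (k : E))
      rwa [show x + h + (k : E) - (h + (k : E)) = x by abel] at this⟩⟩

noncomputable def myPhi (hf : LipschitzWith K f)
    (m₁ : BddFun E →ₗ[ℝ] ℝ) (m₂ : BddFun ↥E₀ →ₗ[ℝ] ℝ)
    (hb₂ : ∀ (φ : BddFun ↥E₀) (C : ℝ), (∀ x, |(φ : ↥E₀ → ℝ) x| ≤ C) → |m₂ φ| ≤ C)
    (y : StrongDual ℝ F) (x : E) : ℝ :=
  m₁ (myOuter E₀ K f hf m₂ hb₂ y x)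

variable {hf : LipschitzWith K f}
  {m₁ : BddFun E →ₗ[ℝ] ℝ} {m₂ : BddFun ↥E₀ →ₗ[ℝ] ℝ}
  {hb₂ : ∀ (φ : BddFun ↥E₀) (C : ℝ), (∀ x, |(φ : ↥E₀ → ℝ) x| ≤ C) → |m₂ φ| ≤ C}

lemma myPhi_abs_le
    (hb₁ : ∀ (φ : BddFun E) (C : ℝ), (∀ x, |(φ : E → ℝ) x| ≤ C) → |m₁ φ| ≤ C)
    (y : StrongDual ℝ F) (x : E) :
    |myPhi E₀ K f hf m₁ m₂ hb₂ y x| ≤ ‖y‖ * (↑K * ‖x‖) := by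
  refine hb₁ _ _ fun h => hb₂ _ _ fun k => ?_
  have := pt_bound hf y (x + h + (k : E)) (h + (k : E))
  rwa [show x + h + (k : E) - (h + (k : E)) = x by abel] at this

lemma myPhi_sub_le
    (hb₁ : ∀ (φ : BddFun E) (C : ℝ), (∀ x, |(φ : E → ℝ) x| ≤ C) → |m₁ φ| ≤ C)
    (y : StrongDual ℝ F) (x₁ x₂ : E) :
    |myPhi E₀ K f hf m₁ m₂ hb₂ y x₁ - myPhi E₀ K f hf m₁ m₂ hb₂ y x₂|
      ≤ ‖y‖ * (↑K * ‖x₁ - x₂‖) := by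
  set C : ℝ := ‖y‖ * (↑K * ‖x₁ - x₂‖) with hCdef
  have hptD : ∀ (h : E) (k : ↥E₀),
      |y (f (x₁ + h + (k : E)) - f (x₂ + h + (k : E)))| ≤ C := by
    intro h k
    have := pt_bound hf y (x₁ + h + (k : E)) (x₂ + h + (k : E))
    rwa [show x₁ + h + (k : E) - (x₂ + h + (k : E)) = x₁ - x₂ by abel] at this
  set Dinner : E → BddFun ↥E₀ := fun h =>
    ⟨fun k => y (f (x₁ + h + (k : E)) - f (x₂ + h + (k : E))), ⟨C, hptD h⟩⟩ with hDinner
  set D : BddFun E := ⟨fun h => m₂ (Dinner h), ⟨C, fun h => hb₂ _ _ (hptD h)⟩⟩ with hD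
  have hsplit : myPhi E₀ K f hf m₁ m₂ hb₂ y x₁
      = myPhi E₀ K f hf m₁ m₂ hb₂ y x₂ + m₁ D := by
    refine mean_split m₁ fun h => ?_
    refine mean_split m₂ fun k => ?_
    show y (f (x₁ + h + (k : E)) - f (h + (k : E)))
      = y (f (x₂ + h + (k : E)) - f (h + (k : E)))
        + y (f (x₁ + h + (k : E)) - f (x₂ + h + (k : E)))
    simp only [map_sub]
    ring
  rw [hsplit]
  rw [show myPhi E₀ K f hf m₁ m₂ hb₂ y x₂ + m₁ D - myPhi E₀ K f hf m₁ m₂ hb₂ y x₂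
    = m₁ D by ring]
  exact hb₁ _ _ fun h => hb₂ _ _ (hptD h)

lemma myPhi_add_y (y₁ y₂ : StrongDual ℝ F) (x : E) :
    myPhi E₀ K f hf m₁ m₂ hb₂ (y₁ + y₂) x
      = myPhi E₀ K f hf m₁ m₂ hb₂ y₁ x + myPhi E₀ K f hf m₁ m₂ hb₂ y₂ x := by
  refine mean_split m₁ fun h => ?_
  refine mean_split m₂ fun k => ?_
  show (y₁ + y₂) (f (x + h + (k : E)) - f (h + (k : E)))
    = y₁ (f (x + h + (k : E)) - f (h + (k : E)))
      + y₂ (f (x + h + (k : E)) - f (h + (k : E)))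
  simp

lemma myPhi_smul_y (c : ℝ) (y : StrongDual ℝ F) (x : E) :
    myPhi E₀ K f hf m₁ m₂ hb₂ (c • y) x = c * myPhi E₀ K f hf m₁ m₂ hb₂ y x := by
  refine mean_smul_split m₁ fun h => ?_
  refine mean_smul_split m₂ fun k => ?_
  show (c • y) (f (x + h + (k : E)) - f (h + (k : E)))
    = c * y (f (x + h + (k : E)) - f (h + (k : E)))
  simp

lemma myPhi_add_x
    (hi₁ : ∀ (φ ψ : BddFun E) (b : E),
      (∀ h, (ψ : E → ℝ) h = (φ : E → ℝ) (h + b)) → m₁ ψ = m₁ φ)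
    (y : StrongDual ℝ F) (x₁ x₂ : E) :
    myPhi E₀ K f hf m₁ m₂ hb₂ y (x₁ + x₂)
      = myPhi E₀ K f hf m₁ m₂ hb₂ y x₁ + myPhi E₀ K f hf m₁ m₂ hb₂ y x₂ := by
  set Dshift : BddFun E :=
    ⟨fun h => m₂ (myInner E₀ K f hf y x₁ (h + x₂)),
      ⟨‖y‖ * (↑K * ‖x₁‖), fun h => hb₂ _ _ fun k => by
        have := pt_bound hf y (x₁ + (h + x₂) + (k : E)) ((h + x₂) + (k : E))
        rwa [show x₁ + (h + x₂) + (k : E) - ((h + x₂) + (k : E)) = x₁ by abel]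
          at this⟩⟩ with hDshift
  have hstep1 : myPhi E₀ K f hf m₁ m₂ hb₂ y (x₁ + x₂)
      = m₁ Dshift + myPhi E₀ K f hf m₁ m₂ hb₂ y x₂ := by
    refine mean_split m₁ fun h => ?_
    refine mean_split m₂ fun k => ?_
    show y (f (x₁ + x₂ + h + (k : E)) - f (h + (k : E)))
      = y (f (x₁ + (h + x₂) + (k : E)) - f ((h + x₂) + (k : E)))
        + y (f (x₂ + h + (k : E)) - f (h + (k : E)))
    rw [show x₁ + (h + x₂) + (k : E) = x₁ + x₂ + h + (k : E) by abel,
        show (h + x₂) + (k : E) = x₂ + h + (k : E) by abel]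
    simp only [map_sub]
    ring
  have hstep2 : m₁ Dshift = myPhi E₀ K f hf m₁ m₂ hb₂ y x₁ :=
    hi₁ (myOuter E₀ K f hf m₂ hb₂ y x₁) Dshift x₂ fun h => rfl
  rw [hstep1, hstep2]

lemma myPhi_mem (T : E₀ →L[ℝ] F) (hext : ∀ x : E₀, f x = T x)
    (hi₂ : ∀ (φ ψ : BddFun ↥E₀) (b : ↥E₀),
      (∀ h, (ψ : ↥E₀ → ℝ) h = (φ : ↥E₀ → ℝ) (h + b)) → m₂ ψ = m₂ φ)
    (hc₁ : ∀ (φ : BddFun E) (c : ℝ), (∀ h, (φ : E → ℝ) h = c) → m₁ φ = c)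
    (hc₂ : ∀ (φ : BddFun ↥E₀) (c : ℝ), (∀ h, (φ : ↥E₀ → ℝ) h = c) → m₂ φ = c)
    (y : StrongDual ℝ F) (e : ↥E₀) :
    myPhi E₀ K f hf m₁ m₂ hb₂ y (e : E) = y (T e) := by
  have hTT : ∀ k : ↥E₀, (f (k : E)) = T k := hext
  have hptχ : ∀ (h : E) (k : ↥E₀), |y (f (h + (k : E)) - T k)| ≤ ‖y‖ * (↑K * ‖h‖) := by
    intro h k
    rw [← hTT k]
    have := pt_bound hf y (h + (k : E)) (k : E)
    rwa [show h + (k : E) - (k : E) = h by abel] at this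
  have hinner : ∀ h : E, m₂ (myInner E₀ K f hf y (e : E) h) = y (T e) := by
    intro h
    set χ : BddFun ↥E₀ := ⟨fun k => y (f (h + (k : E)) - T k),
      ⟨‖y‖ * (↑K * ‖h‖), hptχ h⟩⟩ with hχ
    set χ' : BddFun ↥E₀ := ⟨fun k => y (f (h + ((k + e : ↥E₀) : E)) - T (k + e)),
      ⟨‖y‖ * (↑K * ‖h‖), fun k => hptχ h (k + e)⟩⟩ with hχ'
    set cst : BddFun ↥E₀ := ⟨fun _ => y (T e), ⟨|y (T e)|, fun _ => le_refl _⟩⟩ with hcst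
    have hsplit : m₂ (myInner E₀ K f hf y (e : E) h) = m₂ χ' - m₂ χ + m₂ cst := by
      refine mean_split3 m₂ fun k => ?_
      show y (f ((e : E) + h + (k : E)) - f (h + (k : E)))
        = y (f (h + ((k + e : ↥E₀) : E)) - T (k + e)) - y (f (h + (k : E)) - T k)
          + y (T e)
      have hco : ((k + e : ↥E₀) : E) = (k : E) + (e : E) := rfl
      rw [hco, show h + ((k : E) + (e : E)) = (e : E) + h + (k : E) by abel]
      simp only [map_sub, map_add]
      ring
    have hshift : m₂ χ' = m₂ χ := hi₂ χ χ' e fun k => rfl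
    rw [hsplit, hshift, hc₂ cst (y (T e)) fun _ => rfl]
    ring
  have : myPhi E₀ K f hf m₁ m₂ hb₂ y (e : E)
      = m₁ ⟨fun _ => y (T e), ⟨|y (T e)|, fun _ => le_refl _⟩⟩ :=
    mean_congr m₁ fun h => by
      show m₂ (myInner E₀ K f hf y (e : E) h) = y (T e)
      exact hinner h
  rw [this, hc₁ _ (y (T e)) fun _ => rfl]

lemma myPhi_smul_x
    (hb₁ : ∀ (φ : BddFun E) (C : ℝ), (∀ x, |(φ : E → ℝ) x| ≤ C) → |m₁ φ| ≤ C)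
    (hi₁ : ∀ (φ ψ : BddFun E) (b : E),
      (∀ h, (ψ : E → ℝ) h = (φ : E → ℝ) (h + b)) → m₁ ψ = m₁ φ)
    (y : StrongDual ℝ F) (c : ℝ) (x : E) :
    myPhi E₀ K f hf m₁ m₂ hb₂ y (c • x) = c * myPhi E₀ K f hf m₁ m₂ hb₂ y x := by
  set A : E →+ ℝ := AddMonoidHom.mk' (fun x => myPhi E₀ K f hf m₁ m₂ hb₂ y x)
    (fun a b => myPhi_add_x E₀ K f hi₁ y a b) with hA
  have hlip : LipschitzWith (‖y‖ * ↑K).toNNReal A := by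
    refine LipschitzWith.of_dist_le_mul fun a b => ?_
    rw [Real.dist_eq, dist_eq_norm]
    have h1 := myPhi_sub_le (hf := hf) (m₂ := m₂) (hb₂ := hb₂) E₀ K f hb₁ y a b
    have h2 : ((‖y‖ * ↑K).toNNReal : ℝ) = ‖y‖ * ↑K := by
      rw [Real.coe_toNNReal]
      positivity
    show |A a - A b| ≤ _
    rw [h2]
    calc |A a - A b| ≤ ‖y‖ * (↑K * ‖a - b‖) := h1
      _ = ‖y‖ * ↑K * ‖a - b‖ := by ring
  have := map_smul (A.toRealLinearMap hlip.continuous) c x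
  rwa [A.coe_toRealLinearMap hlip.continuous, smul_eq_mul] at this
  
end Main
/-- Lindenstrauss–Pełczyński: a Lipschitz extension of a bounded linear operator yields
a bounded linear extension into the bidual, with norm at most the Lipschitz constant. -/
theorem stmt0 {E F : Type*} [NormedAddCommGroup E] [NormedSpace ℝ E] [CompleteSpace E]
    [NormedAddCommGroup F] [NormedSpace ℝ F] [CompleteSpace F]
    (E₀ : Subspace ℝ E) (hE₀ : IsClosed (E₀ : Set E))
    (T : E₀ →L[ℝ] F) (K : NNReal) (f : E → F)
    (hf : LipschitzWith K f) (hext : ∀ x : E₀, f x = T x) :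
    ∃ R : E →L[ℝ] StrongDual ℝ (StrongDual ℝ F),
      (∀ x : E₀, R x = inclusionInDoubleDual ℝ F (T x)) ∧ @norm _ (ContinuousLinearMap.hasOpNorm (E := E) (F := StrongDual ℝ (StrongDual ℝ F)) (σ₁₂ := RingHom.id ℝ)) R ≤ K := by
  obtain ⟨m₁, hb₁, hi₁, hc₁⟩ := exists_invariant_mean E
  obtain ⟨m₂, hb₂, hi₂, hc₂⟩ := exists_invariant_mean ↥E₀
  have habs := fun (y : StrongDual ℝ F) (x : E) =>
    myPhi_abs_le (hf := hf) (m₂ := m₂) (hb₂ := hb₂) E₀ K f hb₁ y x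
  set Rx : E → (StrongDual ℝ F →L[ℝ] ℝ) := fun x =>
    LinearMap.mkContinuous
      { toFun := fun y => myPhi E₀ K f hf m₁ m₂ hb₂ y x
        map_add' := fun y₁ y₂ => myPhi_add_y E₀ K f y₁ y₂ x
        map_smul' := fun c y => myPhi_smul_y E₀ K f c y x }
      (↑K * ‖x‖)
      (fun y => by
        rw [Real.norm_eq_abs]
        calc |myPhi E₀ K f hf m₁ m₂ hb₂ y x| ≤ ‖y‖ * (↑K * ‖x‖) := habs y x
          _ = ↑K * ‖x‖ * ‖y‖ := by ring) with hRx
  set Rlin : E →ₗ[ℝ] StrongDual ℝ (StrongDual ℝ F) :=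
    { toFun := Rx
      map_add' := fun a b => ContinuousLinearMap.ext fun y =>
        myPhi_add_x E₀ K f hi₁ y a b
      map_smul' := fun c x => ContinuousLinearMap.ext fun y =>
        myPhi_smul_x E₀ K f hb₁ hi₁ y c x } with hRlin
  have hRlin_norm : ∀ x : E, ‖Rlin x‖ ≤ ↑K * ‖x‖ := fun x =>
    ContinuousLinearMap.opNorm_le_bound _ (by positivity) fun y => by
      show ‖myPhi E₀ K f hf m₁ m₂ hb₂ y x‖ ≤ ↑K * ‖x‖ * ‖y‖
      rw [Real.norm_eq_abs]
      calc |myPhi E₀ K f hf m₁ m₂ hb₂ y x| ≤ ‖y‖ * (↑K * ‖x‖) := habs y x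
        _ = ↑K * ‖x‖ * ‖y‖ := by ring
  refine ⟨LinearMap.mkContinuous (F := StrongDual ℝ (StrongDual ℝ F)) Rlin ↑K hRlin_norm, ?_, ?_⟩
  · intro x
    refine ContinuousLinearMap.ext fun y => ?_
    show myPhi E₀ K f hf m₁ m₂ hb₂ y (x : E) = _
    rw [myPhi_mem E₀ K f T hext hi₂ hc₁ hc₂ y x]
    exact (dual_def ℝ F (T x) y).symm
  · exact ContinuousLinearMap.opNorm_le_bound _ K.coe_nonneg fun x => hRlin_norm x
end

section
/- The identity map of c₀ does not extend to a bounded linear operator from ℓ∞ to c₀; that is, there is no bounded linear operator P : ℓ∞ → c₀ with P(x) = x for all x ∈ c₀. -/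
open BoundedContinuousFunction ZeroAtInfty

namespace PhillipsAux


lemma exists_q (r : ℝ) (n : ℕ) :
    ∃ q : ℚ, r + 1/(n+2) < (q:ℝ) ∧ (q:ℝ) < r + 1/(n+1) := by
  apply exists_rat_btwn
  have h1 : (0:ℝ) < n + 1 := by positivity
  have : (1:ℝ)/(n+2) < 1/(n+1) := by
    apply one_div_lt_one_div_of_lt h1; linarith
  linarith

noncomputable def q (r : ℝ) (n : ℕ) : ℚ := (exists_q r n).choose

lemma q_lb (r : ℝ) (n : ℕ) : r + 1/(n+2) < (q r n : ℝ) := (exists_q r n).choose_spec.1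
lemma q_ub (r : ℝ) (n : ℕ) : (q r n : ℝ) < r + 1/(n+1) := (exists_q r n).choose_spec.2

lemma q_inj (r : ℝ) : Function.Injective (q r) := by
  intro n m h
  by_contra hnm
  wlog hlt : n < m generalizing n m
  · exact this h.symm (Ne.symm hnm) (by omega)
  have h1 := q_lb r n
  have h2 := q_ub r m
  rw [← h] at h2
  have hc : ((n:ℝ)+1) ≤ m := by exact_mod_cast hlt
  have : (1:ℝ)/(m+1) ≤ 1/(n+2) := by
    apply one_div_le_one_div_of_le (by positivity); linarith
  linarith

noncomputable def A (r : ℝ) : Set ℕ := Set.range (fun n => Denumerable.eqv ℚ (q r n))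

lemma A_infinite (r : ℝ) : (A r).Infinite :=
  Set.infinite_range_of_injective ((Denumerable.eqv ℚ).injective.comp (q_inj r))

lemma A_almost_disjoint {r s : ℝ} (h : r ≠ s) : (A r ∩ A s).Finite := by
  obtain ⟨N, hN⟩ := exists_nat_ge (2 / |r - s|)
  have hrs : 0 < |r - s| := abs_pos.mpr (sub_ne_zero.mpr h)
  have key : ∀ n m : ℕ, N ≤ n → N ≤ m → q r n ≠ q s m := by
    intro n m hn hm heq
    have h1 := q_lb r n; have h2 := q_ub r n
    have h3 := q_lb s m; have h4 := q_ub s m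
    rw [heq] at h1 h2
    have hcn : (N:ℝ) ≤ n := by exact_mod_cast hn
    have hcm : (N:ℝ) ≤ m := by exact_mod_cast hm
    have hn1 : (1:ℝ)/(n+1) ≤ 1/(N+1) := by
      apply one_div_le_one_div_of_le (by positivity); linarith
    have hm1 : (1:ℝ)/(m+1) ≤ 1/(N+1) := by
      apply one_div_le_one_div_of_le (by positivity); linarith
    have hpos : (0:ℝ) < 1/(N+1) := by positivity
    have hn2 : (0:ℝ) < 1/((n:ℝ)+2) := by positivity
    have hm2 : (0:ℝ) < 1/((m:ℝ)+2) := by positivity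
    have habs : |r - s| < 2/(N+1) := by
      have : (2:ℝ)/(N+1) = 1/(N+1) + 1/(N+1) := by ring
      rw [abs_sub_lt_iff, this]
      constructor <;> linarith
    have : 2/(N+1) ≤ |r - s| := by
      rw [div_le_iff₀ (by positivity)]
      rw [div_le_iff₀ hrs] at hN
      nlinarith
    linarith
  have sub : A r ∩ A s ⊆
      (fun n => Denumerable.eqv ℚ (q r n)) '' (Set.Iio N) ∪
      (fun n => Denumerable.eqv ℚ (q s n)) '' (Set.Iio N) := by
    rintro k ⟨⟨n, rfl⟩, ⟨m, hm⟩⟩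
    have hq : q s m = q r n := (Denumerable.eqv ℚ).injective hm
    by_cases hn : n < N
    · exact Or.inl ⟨n, hn, rfl⟩
    · rcases lt_or_ge m N with hmN | hmN
      · exact Or.inr ⟨m, hmN, hm⟩
      · exact absurd hq.symm (key n m (le_of_not_gt hn) hmN)
  exact Set.Finite.subset (((Set.finite_Iio N).image _).union ((Set.finite_Iio N).image _)) sub



/-- indicator of a set of naturals, as a bounded function -/
noncomputable def ind (S : Set ℕ) : ℕ →ᵇ ℝ :=
  BoundedContinuousFunction.ofNormedAddCommGroup (S.indicator 1)
    continuous_of_discreteTopology 1 (by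
      intro n
      by_cases h : n ∈ S <;> simp [Set.indicator, h])

lemma ind_apply (S : Set ℕ) (n : ℕ) : ind S n = S.indicator 1 n := rfl

lemma ind_mem (S : Set ℕ) {n : ℕ} (h : n ∈ S) : ind S n = 1 := by
  rw [ind_apply, Set.indicator_of_mem h]; rfl

lemma ind_nmem (S : Set ℕ) {n : ℕ} (h : n ∉ S) : ind S n = 0 := by
  rw [ind_apply, Set.indicator_of_notMem h]

/-- a bounded function with finite support is zero at infinity -/
noncomputable def finC0 (f : ℕ →ᵇ ℝ) (h : {n | f n ≠ 0}.Finite) : C₀(ℕ, ℝ) :=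
  ⟨f.toContinuousMap, by
    rw [Filter.cocompact_eq_cofinite ℕ]
    refine Filter.Tendsto.congr' ?_ tendsto_const_nhds
    filter_upwards [Set.Finite.eventually_cofinite_notMem h] with n hn
    simpa using (not_not.mp hn).symm⟩

lemma finC0_toBCF (f : ℕ →ᵇ ℝ) (h : {n | f n ≠ 0}.Finite) : (finC0 f h).toBCF = f :=
  rfl

/-- toBCF as a continuous linear map -/
noncomputable def toBCFL : C₀(ℕ, ℝ) →L[ℝ] (ℕ →ᵇ ℝ) :=
  LinearMap.mkContinuous
    { toFun := ZeroAtInftyContinuousMap.toBCF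
      map_add' := fun _ _ => rfl
      map_smul' := fun _ _ => rfl } 1
    (fun f => by
      show ‖f.toBCF‖ ≤ 1 * ‖f‖
      rw [ZeroAtInftyContinuousMap.norm_toBCF_eq_norm, one_mul])

@[simp] lemma toBCFL_apply (f : C₀(ℕ, ℝ)) : toBCFL f = f.toBCF := rfl



section Main

variable (P : (ℕ →ᵇ ℝ) →L[ℝ] C₀(ℕ, ℝ))

/-- coordinate functionals of `I - P` -/
noncomputable def g (n : ℕ) : (ℕ →ᵇ ℝ) →L[ℝ] ℝ :=
  (BoundedContinuousFunction.evalCLM ℝ n).comp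
    (ContinuousLinearMap.id ℝ (ℕ →ᵇ ℝ) - toBCFL.comp P)

lemma g_apply (n : ℕ) (x : ℕ →ᵇ ℝ) : g P n x = x n - (P x).toBCF n := by
  simp [g, ContinuousLinearMap.sub_apply]

lemma g_vanish (hP : ∀ x : C₀(ℕ, ℝ), P x.toBCF = x) (n : ℕ) (y : C₀(ℕ, ℝ)) :
    g P n y.toBCF = 0 := by
  rw [g_apply, hP]; ring

/-- Whitley's combinatorial lemma: for fixed n and ε > 0, only finitely many members of
the almost disjoint family have |gₙ(χ_A)| > ε. -/
lemma whitley (hP : ∀ x : C₀(ℕ, ℝ), P x.toBCF = x) (n : ℕ) {ε : ℝ} (hε : 0 < ε) :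
    {r : ℝ | ε < |g P n (ind (A r))|}.Finite := by
  by_contra hinf
  obtain ⟨F, hFsub, hFcard⟩ := Set.Infinite.exists_subset_card_eq hinf (⌈‖g P n‖ / ε⌉₊ + 1)
  classical
  set sgn : ℝ → ℝ := fun r => if 0 ≤ g P n (ind (A r)) then 1 else -1 with hsgn
  set x : ℕ →ᵇ ℝ := ∑ r ∈ F, sgn r • ind (A r) with hx
  -- value of g on x
  have hgx : g P n x = ∑ r ∈ F, |g P n (ind (A r))| := by
    rw [hx, map_sum]
    refine Finset.sum_congr rfl fun r _ => ?_
    rw [map_smul]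
    by_cases h : 0 ≤ g P n (ind (A r))
    · rw [hsgn]; simp [h, abs_of_nonneg h]
    · rw [hsgn]; simp only [h, if_false, smul_eq_mul, neg_one_mul]
      rw [abs_of_neg (lt_of_not_ge h)]
  have hglb : (F.card : ℝ) * ε < g P n x := by
    rw [hgx]
    calc (F.card : ℝ) * ε = ∑ _r ∈ F, ε := by rw [Finset.sum_const, nsmul_eq_mul]
    _ < ∑ r ∈ F, |g P n (ind (A r))| := by
        apply Finset.sum_lt_sum_of_nonempty
        · rw [← Finset.card_pos, hFcard]; omega
        · intro r hr; exact hFsub hr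
  -- the finite "overlap" set
  set K : Set ℕ := ⋃ r ∈ (F : Set ℝ), ⋃ s ∈ (F : Set ℝ) \ {r}, (A r ∩ A s) with hK
  have hKfin : K.Finite := by
    apply Set.Finite.biUnion F.finite_toSet
    intro r _
    apply Set.Finite.biUnion (F.finite_toSet.subset Set.diff_subset)
    intro s hs
    exact A_almost_disjoint (fun h => hs.2 (by simp [h]))
  -- the corrected function
  set c : ℕ →ᵇ ℝ := ind K * x with hc
  have hcsupp : {m | c m ≠ 0}.Finite := by
    apply hKfin.subset
    intro m hm
    by_contra hmK
    apply hm
    show ind K m * x m = 0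
    rw [ind_nmem K hmK, zero_mul]
  have hgc : g P n c = 0 := by
    rw [← finC0_toBCF c hcsupp]
    exact g_vanish P hP n _
  -- sup-norm bound on x - c
  have hxcb : ‖x - c‖ ≤ 1 := by
    rw [BoundedContinuousFunction.norm_le (by norm_num : (0:ℝ) ≤ 1)]
    intro m
    rw [BoundedContinuousFunction.sub_apply]
    by_cases hmK : m ∈ K
    · have : c m = x m := by
        show ind K m * x m = x m
        rw [ind_mem K hmK, one_mul]
      rw [this, sub_self, norm_zero]; norm_num
    · have hcm : c m = 0 := by
        show ind K m * x m = 0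
        rw [ind_nmem K hmK, zero_mul]
      rw [hcm, sub_zero]
      -- |x m| ≤ 1 since m lies in at most one A r, r ∈ F
      have hxm : x m = ∑ r ∈ F, sgn r * ind (A r) m := by
        rw [hx]
        rw [BoundedContinuousFunction.coe_sum, Finset.sum_apply]
        rfl
      set F' := F.filter (fun r => m ∈ A r) with hF'
      have hsum : ∑ r ∈ F, sgn r * ind (A r) m = ∑ r ∈ F', sgn r := by
        rw [hF', Finset.sum_filter]
        refine Finset.sum_congr rfl fun r _ => ?_
        by_cases h : m ∈ A r
        · rw [if_pos h, ind_mem (A r) h, mul_one]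
        · rw [if_neg h, ind_nmem (A r) h, mul_zero]
      have hcard : F'.card ≤ 1 := by
        rw [Finset.card_le_one]
        intro r hr s hs
        by_contra hrs
        apply hmK
        rw [hK]
        refine Set.mem_biUnion (Finset.mem_coe.mpr (Finset.filter_subset _ _ hr)) ?_
        refine Set.mem_biUnion (s := (F : Set ℝ) \ {r}) (x := s) ?_ ?_
        · exact ⟨Finset.mem_coe.mpr (Finset.filter_subset _ _ hs), by simpa using Ne.symm hrs⟩
        · exact ⟨(Finset.mem_filter.mp hr).2, (Finset.mem_filter.mp hs).2⟩
      have : ‖x m‖ ≤ (F'.card : ℝ) := by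
        rw [hxm, hsum]
        calc ‖∑ r ∈ F', sgn r‖ ≤ ∑ r ∈ F', ‖sgn r‖ := norm_sum_le _ _
        _ = (F'.card : ℝ) := by
            rw [Finset.sum_congr rfl (fun r _ => ?_), Finset.sum_const, nsmul_eq_mul, mul_one]
            rw [hsgn]
            by_cases h : 0 ≤ g P n (ind (A r)) <;> simp [h]
      calc ‖x m‖ ≤ (F'.card : ℝ) := this
      _ ≤ 1 := by exact_mod_cast hcard
  -- conclude
  have hub : g P n x ≤ ‖g P n‖ := by
    have : g P n x = g P n (x - c) := by rw [map_sub, hgc, sub_zero]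
    rw [this]
    calc g P n (x - c) ≤ |g P n (x - c)| := le_abs_self _
    _ ≤ ‖g P n‖ * ‖x - c‖ := (g P n).le_opNorm _
    _ ≤ ‖g P n‖ * 1 := by
        exact mul_le_mul_of_nonneg_left hxcb (norm_nonneg (g P n))
    _ = ‖g P n‖ := mul_one _
  have hlb : ‖g P n‖ / ε < (F.card : ℝ) := by
    rw [hFcard]
    push_cast
    calc ‖g P n‖ / ε ≤ (⌈‖g P n‖ / ε⌉₊ : ℝ) := Nat.le_ceil _
    _ < (⌈‖g P n‖ / ε⌉₊ : ℝ) + 1 := by linarith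
  rw [div_lt_iff₀ hε] at hlb
  linarith

theorem stmt2_aux :
    ¬ ∃ P : (ℕ →ᵇ ℝ) →L[ℝ] C₀(ℕ, ℝ), ∀ x : C₀(ℕ, ℝ), P x.toBCF = x := by
  rintro ⟨P, hP⟩
  have hcount : {r : ℝ | ∃ n : ℕ, g P n (ind (A r)) ≠ 0}.Countable := by
    have hsub : {r : ℝ | ∃ n : ℕ, g P n (ind (A r)) ≠ 0} ⊆
        ⋃ n : ℕ, ⋃ k : ℕ, {r : ℝ | 1/((k:ℝ)+1) < |g P n (ind (A r))|} := by
      rintro r ⟨n, hn⟩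
      refine Set.mem_iUnion.mpr ⟨n, ?_⟩
      have habs : 0 < |g P n (ind (A r))| := abs_pos.mpr hn
      obtain ⟨k, hk⟩ := exists_nat_one_div_lt habs
      exact Set.mem_iUnion.mpr ⟨k, hk⟩
    refine Set.Countable.mono hsub ?_
    refine Set.countable_iUnion fun n => Set.countable_iUnion fun k => ?_
    exact (whitley P hP n (by positivity)).countable
  have huniv : ¬ (Set.univ : Set ℝ).Countable := Cardinal.not_countable_real
  have hne : {r : ℝ | ∃ n : ℕ, g P n (ind (A r)) ≠ 0} ≠ Set.univ := by
    intro h; exact huniv (h ▸ hcount)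
  obtain ⟨r, hr⟩ : ∃ r : ℝ, ∀ n : ℕ, g P n (ind (A r)) = 0 := by
    rcases Set.ne_univ_iff_exists_notMem _ |>.mp hne with ⟨r, hr⟩
    exact ⟨r, fun n => by_contra fun h => hr ⟨n, h⟩⟩
  -- so P(χ_{A r}) agrees with χ_{A r} on every coordinate
  have hcoord : ∀ n : ℕ, ((P (ind (A r))) : ℕ → ℝ) n = ind (A r) n := by
    intro n
    have := hr n
    rw [g_apply] at this
    have h2 : ((P (ind (A r))).toBCF : ℕ → ℝ) n = ((P (ind (A r))) : ℕ → ℝ) n := rfl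
    linarith [this, h2 ▸ this]
  -- but P(χ_{A r}) vanishes at infinity while χ_{A r} is 1 on the infinite set A r
  have ht : Filter.Tendsto (fun n => ((P (ind (A r))) : ℕ → ℝ) n) Filter.atTop (nhds 0) := by
    have := zero_at_infty (P (ind (A r)))
    rwa [Filter.cocompact_eq_cofinite, Nat.cofinite_eq_atTop] at this
  obtain ⟨N, hN⟩ := (Metric.tendsto_atTop.mp ht) (1/2) (by norm_num)
  obtain ⟨n, hnA, hnN⟩ := (A_infinite r).exists_gt N
  have := hN n (le_of_lt hnN)
  rw [hcoord n, ind_mem (A r) hnA] at this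
  simp [Real.dist_eq] at this
  linarith

end Main


end PhillipsAux

/-- Phillips–Sobczyk: c₀ is not complemented in ℓ∞; there is no bounded linear
projection from ℓ∞ onto c₀ restricting to the identity on c₀. -/
theorem stmt2 :
    ¬ ∃ P : (ℕ →ᵇ ℝ) →L[ℝ] C₀(ℕ, ℝ), ∀ x : C₀(ℕ, ℝ), P x.toBCF = x := by
  exact PhillipsAux.stmt2_aux
end

section
/- Let E, F be real Banach spaces and T : E → F' a bounded linear operator into a dual space F' = (F)'. Suppose T = g ∘ f where f : E → ℓ∞(B_{E'}) and g : ℓ∞(B_{E'}) → F' are Lipschitz maps (with f(0) = 0, g(0) = 0). Then there exist a bounded linear operator S : E → ℓ∞(B_{E'}) and a bounded linear operator R : ℓ∞(B_{E'}) → F' such that T = R ∘ S and ‖R‖·‖S‖ ≤ Lip(f)·Lip(g). -/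
open NormedSpace

namespace Stmt10Aux

open Finset

variable {Γ : Type*} [AddCommGroup Γ]

/-- The submodule of bounded real functions on `Γ`. -/
def BddFun (Γ : Type*) [AddCommGroup Γ] : Submodule ℝ (Γ → ℝ) where
  carrier := {φ | ∃ C, ∀ x, |φ x| ≤ C}
  add_mem' := by
    rintro φ ψ ⟨C, hC⟩ ⟨D, hD⟩
    exact ⟨C + D, fun x => (abs_add_le _ _).trans (add_le_add (hC x) (hD x))⟩
  zero_mem' := ⟨0, fun x => by simp⟩
  smul_mem' := by
    rintro c φ ⟨C, hC⟩
    exact ⟨|c| * C, fun x => by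
      simpa [abs_mul] using mul_le_mul_of_nonneg_left (hC x) (abs_nonneg c)⟩

/-- The set of "upper averages" of `φ`. -/
def meanSet (φ : Γ → ℝ) : Set ℝ :=
  {r | ∃ n : ℕ, 0 < n ∧ ∃ a : Fin n → Γ, ∀ x, (∑ i, φ (x + a i)) ≤ n * r}

/-- The classical sublinear functional used to construct invariant means. -/
noncomputable def meanP (φ : Γ → ℝ) : ℝ := sInf (meanSet φ)

theorem meanSet_nonempty {φ : Γ → ℝ} (hφ : ∃ C, ∀ x, |φ x| ≤ C) :
    (meanSet φ).Nonempty := by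
  obtain ⟨C, hC⟩ := hφ
  exact ⟨C, 1, one_pos, fun _ => 0, fun x => by
    simpa using (abs_le.1 (hC (x + 0))).2⟩

theorem meanSet_bddBelow {φ : Γ → ℝ} (hφ : ∃ C, ∀ x, |φ x| ≤ C) :
    BddBelow (meanSet φ) := by
  obtain ⟨C, hC⟩ := hφ
  refine ⟨-C, ?_⟩
  rintro r ⟨n, hn, a, ha⟩
  have h1 : -((n : ℝ) * C) ≤ ∑ i, φ ((0 : Γ) + a i) := by
    have : ∀ i ∈ Finset.univ (α := Fin n), -C ≤ φ ((0 : Γ) + a i) := fun i _ =>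
      (abs_le.1 (hC _)).1
    calc -((n : ℝ) * C) = ∑ _i : Fin n, (-C) := by simp [mul_comm]
    _ ≤ _ := Finset.sum_le_sum this
  have h2 := h1.trans (ha 0)
  have hn' : (0 : ℝ) < n := by exact_mod_cast hn
  nlinarith

theorem meanP_le {φ : Γ → ℝ} (hφ : ∃ C, ∀ x, |φ x| ≤ C) {C : ℝ}
    (h : ∀ x, φ x ≤ C) : meanP φ ≤ C :=
  csInf_le (meanSet_bddBelow hφ) ⟨1, one_pos, fun _ => 0, fun x => by simpa using h (x + 0)⟩

theorem meanP_add {φ ψ : Γ → ℝ} (hφ : ∃ C, ∀ x, |φ x| ≤ C) (hψ : ∃ C, ∀ x, |ψ x| ≤ C) :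
    meanP (φ + ψ) ≤ meanP φ + meanP ψ := by
  have key : ∀ r ∈ meanSet φ, ∀ s ∈ meanSet ψ, meanP (φ + ψ) ≤ r + s := by
    rintro r ⟨n, hn, a, ha⟩ s ⟨m, hm, b, hb⟩
    have hab : ∃ C, ∀ x, |(φ + ψ) x| ≤ C := by
      obtain ⟨C, hC⟩ := hφ; obtain ⟨D, hD⟩ := hψ
      exact ⟨C + D, fun x => (abs_add_le _ _).trans (add_le_add (hC x) (hD x))⟩
    refine csInf_le (meanSet_bddBelow hab) ⟨n * m, Nat.mul_pos hn hm,
      fun k => a ((finProdFinEquiv.symm k).1) + b ((finProdFinEquiv.symm k).2), fun x => ?_⟩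
    have hsum : ∀ (χ : Γ → ℝ),
        (∑ k : Fin (n * m), χ (x + (a (finProdFinEquiv.symm k).1 + b (finProdFinEquiv.symm k).2)))
        = ∑ p : Fin n × Fin m, χ (x + (a p.1 + b p.2)) := by
      intro χ
      exact Fintype.sum_equiv finProdFinEquiv.symm _ _ (fun k => rfl)
    have h1 : (∑ p : Fin n × Fin m, φ (x + (a p.1 + b p.2))) ≤ (n * m : ℕ) * r := by
      rw [Fintype.sum_prod_type_right]
      calc (∑ j : Fin m, ∑ i : Fin n, φ (x + (a i + b j)))
          ≤ ∑ _j : Fin m, (n : ℝ) * r := by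
            refine Finset.sum_le_sum fun j _ => ?_
            have := ha (x + b j)
            calc (∑ i : Fin n, φ (x + (a i + b j))) = ∑ i : Fin n, φ ((x + b j) + a i) := by
                  refine Finset.sum_congr rfl fun i _ => ?_
                  congr 1; abel
            _ ≤ (n : ℝ) * r := this
        _ = (n * m : ℕ) * r := by
            simp [Finset.sum_const, Finset.card_univ, nsmul_eq_mul]; push_cast; ring
    have h2 : (∑ p : Fin n × Fin m, ψ (x + (a p.1 + b p.2))) ≤ (n * m : ℕ) * s := by
      rw [Fintype.sum_prod_type]
      calc (∑ i : Fin n, ∑ j : Fin m, ψ (x + (a i + b j)))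
          ≤ ∑ _i : Fin n, (m : ℝ) * s := by
            refine Finset.sum_le_sum fun i _ => ?_
            have := hb (x + a i)
            calc (∑ j : Fin m, ψ (x + (a i + b j))) = ∑ j : Fin m, ψ ((x + a i) + b j) := by
                  refine Finset.sum_congr rfl fun j _ => ?_
                  congr 1; abel
            _ ≤ (m : ℝ) * s := this
        _ = (n * m : ℕ) * s := by
            simp [Finset.sum_const, Finset.card_univ, nsmul_eq_mul]; push_cast; ring
    calc (∑ k : Fin (n * m),
          (φ + ψ) (x + (a (finProdFinEquiv.symm k).1 + b (finProdFinEquiv.symm k).2)))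
        = (∑ p : Fin n × Fin m, φ (x + (a p.1 + b p.2)))
          + (∑ p : Fin n × Fin m, ψ (x + (a p.1 + b p.2))) := by
          rw [hsum (φ + ψ)]
          simp [Pi.add_apply, Finset.sum_add_distrib]
      _ ≤ (n * m : ℕ) * r + (n * m : ℕ) * s := add_le_add h1 h2
      _ = (n * m : ℕ) * (r + s) := by ring
  have step1 : ∀ r ∈ meanSet φ, meanP (φ + ψ) - r ≤ meanP ψ := by
    intro r hr
    refine le_csInf (meanSet_nonempty hψ) fun s hs => ?_
    linarith [key r hr s hs]
  have : meanP (φ + ψ) - meanP ψ ≤ meanP φ := by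
    refine le_csInf (meanSet_nonempty hφ) fun r hr => ?_
    linarith [step1 r hr]
  linarith

theorem meanP_smul_le {c : ℝ} (hc : 0 < c) (φ : Γ → ℝ) (hφ : ∃ C, ∀ x, |φ x| ≤ C) :
    meanP (c • φ) ≤ c * meanP φ := by
  have hcφ : ∃ C, ∀ x, |(c • φ) x| ≤ C := (BddFun Γ).smul_mem c hφ
  have key : ∀ r ∈ meanSet φ, meanP (c • φ) ≤ c * r := by
    rintro r ⟨n, hn, a, ha⟩
    refine csInf_le (meanSet_bddBelow hcφ) ⟨n, hn, a, fun x => ?_⟩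
    calc (∑ i, (c • φ) (x + a i)) = c * ∑ i, φ (x + a i) := by
          simp [Finset.mul_sum]
      _ ≤ c * ((n : ℝ) * r) := mul_le_mul_of_nonneg_left (ha x) hc.le
      _ = (n : ℝ) * (c * r) := by ring
  have : meanP (c • φ) / c ≤ meanP φ := by
    refine le_csInf (meanSet_nonempty hφ) fun r hr => ?_
    rw [div_le_iff₀ hc]
    linarith [key r hr, mul_comm r c]
  calc meanP (c • φ) = c * (meanP (c • φ) / c) := by field_simp
    _ ≤ c * meanP φ := mul_le_mul_of_nonneg_left this hc.le

theorem meanP_smul {c : ℝ} (hc : 0 < c) (φ : Γ → ℝ) (hφ : ∃ C, ∀ x, |φ x| ≤ C) :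
    meanP (c • φ) = c * meanP φ := by
  have h1 := meanP_smul_le hc φ hφ
  have hcφ : ∃ C, ∀ x, |(c • φ) x| ≤ C := (BddFun Γ).smul_mem c hφ
  have h2 := meanP_smul_le (inv_pos.2 hc) (c • φ) hcφ
  have : c⁻¹ • (c • φ) = φ := by
    rw [smul_smul, inv_mul_cancel₀ hc.ne', one_smul]
  rw [this] at h2
  have h3 : c * meanP φ ≤ meanP (c • φ) := by
    have := mul_le_mul_of_nonneg_left h2 hc.le
    rwa [← mul_assoc, mul_inv_cancel₀ hc.ne', one_mul] at this
  linarith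

theorem meanP_shift_sub_le (φ : Γ → ℝ) (hφ : ∃ C, ∀ x, |φ x| ≤ C) (a₀ : Γ) :
    meanP (fun x => φ (x + a₀) - φ x) ≤ 0 := by
  obtain ⟨C, hC⟩ := hφ
  have hC0 : 0 ≤ C := le_trans (abs_nonneg _) (hC 0)
  have hψ : ∃ D, ∀ x, |φ (x + a₀) - φ x| ≤ D :=
    ⟨2 * C, fun x => by
      have := abs_sub (φ (x + a₀)) (φ x)
      calc |φ (x + a₀) - φ x| ≤ |φ (x + a₀)| + |φ x| := abs_sub _ _
        _ ≤ 2 * C := by linarith [hC (x + a₀), hC x]⟩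
  refine le_of_forall_pos_le_add fun ε hε => ?_
  rw [zero_add]
  obtain ⟨n, hn⟩ := exists_nat_ge (2 * C / ε)
  have hn1 : (0:ℕ) < n + 1 := Nat.succ_pos n
  refine csInf_le (meanSet_bddBelow hψ) ⟨n + 1, hn1, fun i => ((i : ℕ) + 1) • a₀, fun x => ?_⟩
  have hstep : ∀ i : ℕ, φ (x + (i + 1) • a₀ + a₀) = φ (x + (i + 1 + 1) • a₀) := by
    intro i
    conv_rhs => rw [succ_nsmul]
    rw [← add_assoc]
  have tele : (∑ i : Fin (n+1), (φ (x + ((i : ℕ) + 1) • a₀ + a₀) - φ (x + ((i : ℕ) + 1) • a₀)))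
      = φ (x + (n + 1 + 1) • a₀) - φ (x + (0 + 1) • a₀) := by
    calc (∑ i : Fin (n+1), (φ (x + ((i : ℕ) + 1) • a₀ + a₀) - φ (x + ((i : ℕ) + 1) • a₀)))
        = ∑ i ∈ Finset.range (n+1),
            (φ (x + (i + 1 + 1) • a₀) - φ (x + (i + 1) • a₀)) := by
          rw [Fin.sum_univ_eq_sum_range
            (fun i => φ (x + (i + 1) • a₀ + a₀) - φ (x + (i + 1) • a₀)) (n+1)]
          exact Finset.sum_congr rfl fun i _ => by rw [hstep i]
      _ = φ (x + (n + 1 + 1) • a₀) - φ (x + (0 + 1) • a₀) :=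
          Finset.sum_range_sub (fun k => φ (x + (k + 1) • a₀)) (n+1)
  calc (∑ i : Fin (n+1), (φ ((x + ((i : ℕ) + 1) • a₀) + a₀) - φ (x + ((i : ℕ) + 1) • a₀)))
      = (∑ i : Fin (n+1), (φ (x + ((i : ℕ) + 1) • a₀ + a₀) - φ (x + ((i : ℕ) + 1) • a₀))) := rfl
    _ = φ (x + (n + 1 + 1) • a₀) - φ (x + (0 + 1) • a₀) := tele
    _ ≤ 2 * C := by
        have h1 := abs_le.1 (hC (x + (n + 1 + 1) • a₀))
        have h2 := abs_le.1 (hC (x + (0 + 1) • a₀))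
        linarith [h1.1, h1.2, h2.1, h2.2]
    _ ≤ (n + 1 : ℕ) * ε := by
        have : 2 * C ≤ (n : ℝ) * ε := by
          rw [div_le_iff₀ hε] at hn
          linarith
        push_cast
        nlinarith

theorem meanP_zero_nonneg : (0 : ℝ) ≤ meanP (0 : Γ → ℝ) := by
  refine le_csInf (meanSet_nonempty ⟨0, fun x => by simp⟩) ?_
  rintro r ⟨n, hn, a, ha⟩
  have := ha 0
  simp only [Pi.zero_apply, Finset.sum_const_zero] at this
  have hn' : (0 : ℝ) < n := by exact_mod_cast hn
  nlinarith

/-- Translation of a bounded function. -/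
def shiftB (a : Γ) (φ : BddFun Γ) : BddFun Γ :=
  ⟨fun x => (φ : Γ → ℝ) (x + a), by
    obtain ⟨C, hC⟩ := φ.2
    exact ⟨C, fun x => hC (x + a)⟩⟩

/-- Existence of an invariant mean on an abelian group. -/
theorem exists_invariant_mean (Γ : Type*) [AddCommGroup Γ] :
    ∃ Λ : BddFun Γ →ₗ[ℝ] ℝ,
      (∀ (φ : BddFun Γ) (C : ℝ), (∀ x, (φ : Γ → ℝ) x ≤ C) → Λ φ ≤ C) ∧
      (∀ (φ : BddFun Γ) (a : Γ), Λ (shiftB a φ) = Λ φ) := by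
  have N_hom : ∀ c : ℝ, 0 < c → ∀ φ : BddFun Γ,
      meanP ((c • φ : BddFun Γ) : Γ → ℝ) = c * meanP (φ : Γ → ℝ) := by
    intro c hc φ
    have : ((c • φ : BddFun Γ) : Γ → ℝ) = c • (φ : Γ → ℝ) := rfl
    rw [this, meanP_smul hc _ φ.2]
  have N_add : ∀ φ ψ : BddFun Γ,
      meanP ((φ + ψ : BddFun Γ) : Γ → ℝ) ≤ meanP (φ : Γ → ℝ) + meanP (ψ : Γ → ℝ) := by
    intro φ ψ
    have : ((φ + ψ : BddFun Γ) : Γ → ℝ) = (φ : Γ → ℝ) + (ψ : Γ → ℝ) := rfl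
    rw [this]
    exact meanP_add φ.2 ψ.2
  obtain ⟨Λ, -, hΛ⟩ := exists_extension_of_le_sublinear
    (⟨⊥, 0⟩ : (BddFun Γ) →ₗ.[ℝ] ℝ) (fun φ => meanP (φ : Γ → ℝ))
    (fun c hc φ => N_hom c hc φ) N_add
    (by
      rintro ⟨x, hx⟩
      have hx0 : x = 0 := by simpa using hx
      subst hx0
      simpa using meanP_zero_nonneg)
  refine ⟨Λ, fun φ C h => (hΛ φ).trans (meanP_le φ.2 h), fun φ a => ?_⟩
  have h1 : Λ (shiftB a φ) - Λ φ ≤ 0 := by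
    have := hΛ (shiftB a φ - φ)
    rw [map_sub] at this
    refine this.trans ?_
    have hcoe : ((shiftB a φ - φ : BddFun Γ) : Γ → ℝ)
        = fun x => (φ : Γ → ℝ) (x + a) - (φ : Γ → ℝ) x := rfl
    rw [hcoe]
    exact meanP_shift_sub_le _ φ.2 a
  have h2 : Λ φ - Λ (shiftB a φ) ≤ 0 := by
    have := hΛ (φ - shiftB a φ)
    rw [map_sub] at this
    refine this.trans ?_
    have hcoe : ((φ - shiftB a φ : BddFun Γ) : Γ → ℝ)
        = fun x => ((shiftB a φ : BddFun Γ) : Γ → ℝ) (x + (-a))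
            - ((shiftB a φ : BddFun Γ) : Γ → ℝ) x := by
      funext x
      show (φ : Γ → ℝ) x - (φ : Γ → ℝ) (x + a) = (φ : Γ → ℝ) (x + -a + a) - (φ : Γ → ℝ) (x + a)
      rw [show x + -a + a = x by abel]
    rw [hcoe]
    exact meanP_shift_sub_le _ (shiftB a φ).2 (-a)
  linarith

theorem BddFun.ext' {Γ : Type*} [AddCommGroup Γ] {φ ψ : BddFun Γ}
    (h : ∀ x, (φ : Γ → ℝ) x = (ψ : Γ → ℝ) x) : φ = ψ := Subtype.ext (funext h)

theorem mean_abs_le {Γ : Type*} [AddCommGroup Γ] (Λ : BddFun Γ →ₗ[ℝ] ℝ)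
    (hb : ∀ (φ : BddFun Γ) (C : ℝ), (∀ x, (φ : Γ → ℝ) x ≤ C) → Λ φ ≤ C)
    (φ : BddFun Γ) (C : ℝ) (h : ∀ x, |(φ : Γ → ℝ) x| ≤ C) : |Λ φ| ≤ C := by
  rw [abs_le]
  constructor
  · have := hb (-φ) C (fun x => by
      have : -((φ : Γ → ℝ) x) ≤ C := by linarith [(abs_le.1 (h x)).1]
      simpa using this)
    rw [map_neg] at this
    linarith
  · exact hb φ C fun x => (abs_le.1 (h x)).2

theorem mean_const {Γ : Type*} [AddCommGroup Γ] (Λ : BddFun Γ →ₗ[ℝ] ℝ)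
    (hb : ∀ (φ : BddFun Γ) (C : ℝ), (∀ x, (φ : Γ → ℝ) x ≤ C) → Λ φ ≤ C)
    (c : ℝ) (m : (fun _ : Γ => c) ∈ BddFun Γ) : Λ ⟨fun _ => c, m⟩ = c := by
  have h1 := hb ⟨fun _ => c, m⟩ c (fun _ => le_rfl)
  have h2 := hb (-⟨fun _ => c, m⟩) (-c) (fun x => le_of_eq rfl)
  rw [map_neg] at h2
  linarith

/-- Linearization: a Lipschitz map into a dual space which restricts to a linear
operator on a linearly embedded subspace can be replaced by a bounded linear operator
with the same restriction and norm at most the Lipschitz constant. -/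
theorem exists_linear_extension {E X F : Type*} [NormedAddCommGroup E] [NormedSpace ℝ E]
    [NormedAddCommGroup X] [NormedSpace ℝ X] [NormedAddCommGroup F] [NormedSpace ℝ F]
    (ι : E →L[ℝ] X) (T : E →L[ℝ] StrongDual ℝ F) (G : X → StrongDual ℝ F)
    (K : ℝ) (hK : 0 ≤ K)
    (hGlip : ∀ (a b : X) (y : F), |G a y - G b y| ≤ K * ‖a - b‖ * ‖y‖)
    (hGι : ∀ x, G (ι x) = T x) :
    ∃ R : X →L[ℝ] StrongDual ℝ F, (∀ x, R (ι x) = T x) ∧ ‖R‖ ≤ K := by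
  obtain ⟨ΛE, ΛEle, ΛEinv⟩ := exists_invariant_mean E
  obtain ⟨ΛX, ΛXle, ΛXinv⟩ := exists_invariant_mean X
  -- the function whose mean defines `γ`
  have mφ : ∀ (h : X) (y : F), (fun x : E => G (ι x + h) y - G (ι x) y) ∈ BddFun E := by
    intro h y
    refine ⟨K * ‖h‖ * ‖y‖, fun x => ?_⟩
    have := hGlip (ι x + h) (ι x) y
    simpa [add_sub_cancel_left] using this
  set γ : X → F → ℝ := fun h y => ΛE ⟨fun x => G (ι x + h) y - G (ι x) y, mφ h y⟩ with hγ
  have mdiff : ∀ (z h : X) (y : F),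
      (fun x : E => G (ι x + (z + h)) y - G (ι x + z) y) ∈ BddFun E := by
    intro z h y
    refine ⟨K * ‖h‖ * ‖y‖, fun x => ?_⟩
    have := hGlip (ι x + (z + h)) (ι x + z) y
    have harg : ι x + (z + h) - (ι x + z) = h := by abel
    rwa [harg] at this
  have γdiff : ∀ (z h : X) (y : F),
      γ (z + h) y - γ z y = ΛE ⟨fun x => G (ι x + (z + h)) y - G (ι x + z) y, mdiff z h y⟩ := by
    intro z h y
    rw [hγ]
    simp only
    rw [← map_sub]
    congr 1
    refine BddFun.ext' fun x => ?_
    show (G (ι x + (z + h)) y - G (ι x) y) - (G (ι x + z) y - G (ι x) y) = _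
    ring_nf
  have γbound : ∀ (z h : X) (y : F), |γ (z + h) y - γ z y| ≤ K * ‖h‖ * ‖y‖ := by
    intro z h y
    rw [γdiff]
    refine mean_abs_le ΛE ΛEle _ _ fun x => ?_
    have := hGlip (ι x + (z + h)) (ι x + z) y
    have harg : ι x + (z + h) - (ι x + z) = h := by abel
    rwa [harg] at this
  have γzero : ∀ y : F, γ 0 y = 0 := by
    intro y
    rw [hγ]
    simp only
    have : (⟨fun x : E => G (ι x + 0) y - G (ι x) y, mφ 0 y⟩ : BddFun E)
        = ⟨fun _ => (0:ℝ), ⟨0, fun x => by simp⟩⟩ := by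
      refine BddFun.ext' fun x => ?_
      show G (ι x + 0) y - G (ι x) y = 0
      rw [add_zero]; ring
    rw [this]; exact mean_const ΛE ΛEle _ _
  have γbound' : ∀ (h : X) (y : F), |γ h y| ≤ K * ‖h‖ * ‖y‖ := by
    intro h y
    have := γbound 0 h y
    rw [zero_add, γzero] at this
    simpa using this
  have γaddy : ∀ (h : X) (y₁ y₂ : F), γ h (y₁ + y₂) = γ h y₁ + γ h y₂ := by
    intro h y₁ y₂
    rw [hγ]
    simp only
    rw [← map_add]
    congr 1
    refine BddFun.ext' fun x => ?_
    show G (ι x + h) (y₁ + y₂) - G (ι x) (y₁ + y₂) = _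
    rw [map_add, map_add]
    show _ = (G (ι x + h) y₁ - G (ι x) y₁) + (G (ι x + h) y₂ - G (ι x) y₂)
    ring
  have γsmuly : ∀ (h : X) (c : ℝ) (y : F), γ h (c • y) = c * γ h y := by
    intro h c y
    rw [hγ]
    simp only
    have key : (⟨fun x : E => G (ι x + h) (c • y) - G (ι x) (c • y), mφ h (c • y)⟩ : BddFun E)
        = c • (⟨fun x : E => G (ι x + h) y - G (ι x) y, mφ h y⟩ : BddFun E) := by
      refine BddFun.ext' fun x => ?_
      show G (ι x + h) (c • y) - G (ι x) (c • y) = c * (G (ι x + h) y - G (ι x) y)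
      rw [map_smul, map_smul, smul_eq_mul, smul_eq_mul]
      ring
    rw [key, LinearMap.map_smul, smul_eq_mul]
  have γshift : ∀ (h : X) (m : E) (y : F), γ (h + ι m) y = γ h y + T m y := by
    intro h m y
    rw [hγ]
    simp only
    have key : (⟨fun x : E => G (ι x + (h + ι m)) y - G (ι x) y, mφ (h + ι m) y⟩ : BddFun E)
        = shiftB m ⟨fun x : E => G (ι x + h) y - G (ι x) y, mφ h y⟩
          + ⟨fun _ => T m y, ⟨|T m y|, fun _ => le_rfl⟩⟩ := by
      refine BddFun.ext' fun x => ?_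
      show G (ι x + (h + ι m)) y - G (ι x) y
          = (G (ι (x + m) + h) y - G (ι (x + m)) y) + T m y
      have h1 : ι (x + m) = ι x + ι m := map_add ι x m
      have h2 : ι x + ι m + h = ι x + (h + ι m) := by abel
      rw [hGι (x + m), hGι x, map_add T, h1, h2]
      show G (ι x + (h + ι m)) y - T x y
          = (G (ι x + (h + ι m)) y - (T x y + T m y)) + T m y
      ring
    rw [key, map_add, ΛEinv]; exact congrArg (_ + ·) (mean_const ΛE ΛEle _ _)
  -- now the second averaging
  have mβ : ∀ (h : X) (y : F), (fun z : X => γ (z + h) y - γ z y) ∈ BddFun X :=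
    fun h y => ⟨K * ‖h‖ * ‖y‖, fun z => γbound z h y⟩
  set β : X → F → ℝ := fun h y => ΛX ⟨fun z => γ (z + h) y - γ z y, mβ h y⟩ with hβ
  have βbound : ∀ (h : X) (y : F), |β h y| ≤ K * ‖h‖ * ‖y‖ := by
    intro h y
    exact mean_abs_le ΛX ΛXle _ _ fun z => γbound z h y
  have βaddh : ∀ (h h' : X) (y : F), β (h + h') y = β h y + β h' y := by
    intro h h' y
    rw [hβ]
    simp only
    have key : (⟨fun z : X => γ (z + (h + h')) y - γ z y, mβ (h + h') y⟩ : BddFun X)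
        = shiftB h' ⟨fun z : X => γ (z + h) y - γ z y, mβ h y⟩
          + ⟨fun z : X => γ (z + h') y - γ z y, mβ h' y⟩ := by
      refine BddFun.ext' fun z => ?_
      show γ (z + (h + h')) y - γ z y
          = (γ ((z + h') + h) y - γ (z + h') y) + (γ (z + h') y - γ z y)
      have : z + (h + h') = (z + h') + h := by abel
      rw [this]
      ring
    rw [key, map_add, ΛXinv]
  have βι : ∀ (m : E) (y : F), β (ι m) y = T m y := by
    intro m y
    rw [hβ]
    simp only
    have key : (⟨fun z : X => γ (z + ι m) y - γ z y, mβ (ι m) y⟩ : BddFun X)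
        = ⟨fun _ => T m y, ⟨|T m y|, fun _ => le_rfl⟩⟩ := by
      refine BddFun.ext' fun z => ?_
      show γ (z + ι m) y - γ z y = T m y
      rw [γshift z m y]
      ring
    rw [key]; exact mean_const ΛX ΛXle _ _
  have βaddy : ∀ (h : X) (y₁ y₂ : F), β h (y₁ + y₂) = β h y₁ + β h y₂ := by
    intro h y₁ y₂
    rw [hβ]
    simp only
    rw [← map_add]
    congr 1
    refine BddFun.ext' fun z => ?_
    show γ (z + h) (y₁ + y₂) - γ z (y₁ + y₂) = _
    rw [γaddy, γaddy]
    show _ = (γ (z + h) y₁ - γ z y₁) + (γ (z + h) y₂ - γ z y₂)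
    ring
  have βsmuly : ∀ (h : X) (c : ℝ) (y : F), β h (c • y) = c * β h y := by
    intro h c y
    rw [hβ]
    simp only
    have key : (⟨fun z : X => γ (z + h) (c • y) - γ z (c • y), mβ h (c • y)⟩ : BddFun X)
        = c • (⟨fun z : X => γ (z + h) y - γ z y, mβ h y⟩ : BddFun X) := by
      refine BddFun.ext' fun z => ?_
      show γ (z + h) (c • y) - γ z (c • y) = c * (γ (z + h) y - γ z y)
      rw [γsmuly, γsmuly]
      ring
    rw [key, LinearMap.map_smul, smul_eq_mul]
  -- assemble the linear operator
  let Rfun : X → StrongDual ℝ F := fun h =>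
    LinearMap.mkContinuous
      { toFun := β h
        map_add' := βaddy h
        map_smul' := fun c y => βsmuly h c y }
      (K * ‖h‖)
      (fun y => by
        rw [mul_assoc]
        have := βbound h y
        calc ‖β h y‖ = |β h y| := rfl
          _ ≤ K * ‖h‖ * ‖y‖ := this
          _ = K * (‖h‖ * ‖y‖) := by ring)
  have Rfun_apply : ∀ (h : X) (y : F), Rfun h y = β h y := fun _ _ => rfl
  have Radd : ∀ h h' : X, Rfun (h + h') = Rfun h + Rfun h' := by
    intro h h'
    ext y
    simp [Rfun_apply, βaddh]
  let Rhom : X →+ StrongDual ℝ F := AddMonoidHom.mk' Rfun Radd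
  have Rnorm : ∀ h : X, ‖Rhom h‖ ≤ K * ‖h‖ := by
    intro h
    refine ContinuousLinearMap.opNorm_le_bound _ (by positivity) fun y => ?_
    calc ‖Rhom h y‖ = |β h y| := rfl
      _ ≤ K * ‖h‖ * ‖y‖ := βbound h y
  have Rcont : Continuous Rhom :=
    AddMonoidHomClass.continuous_of_bound Rhom K Rnorm
  let R : X →L[ℝ] StrongDual ℝ F := Rhom.toRealLinearMap Rcont
  refine ⟨R, fun x => ?_, ?_⟩
  · ext y
    show β (ι x) y = T x y
    exact βι x y
  · refine ContinuousLinearMap.opNorm_le_bound _ hK fun h => ?_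
    exact Rnorm h

end Stmt10Aux

open Stmt10Aux in
/-- A linear operator into a dual space admitting a Lipschitz factorization through
ℓ∞(B_{E'}) admits a linear factorization through ℓ∞(B_{E'}) with controlled norms. -/
theorem stmt10 {E F : Type*} [NormedAddCommGroup E] [NormedSpace ℝ E] [CompleteSpace E]
    [NormedAddCommGroup F] [NormedSpace ℝ F] [CompleteSpace F]
    (T : E →L[ℝ] StrongDual ℝ F)
    (f : E → lp (fun _ : (Metric.closedBall (0 : StrongDual ℝ E) 1) => ℝ) ⊤)
    (g : lp (fun _ : (Metric.closedBall (0 : StrongDual ℝ E) 1) => ℝ) ⊤ → StrongDual ℝ F)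
    (Kf Kg : NNReal) (hf : LipschitzWith Kf f) (hg : LipschitzWith Kg g)
    (hf0 : f 0 = 0) (hg0 : g 0 = 0) (hT : ∀ x : E, T x = g (f x)) :
    ∃ (S : E →L[ℝ] lp (fun _ : (Metric.closedBall (0 : StrongDual ℝ E) 1) => ℝ) ⊤)
      (R : lp (fun _ : (Metric.closedBall (0 : StrongDual ℝ E) 1) => ℝ) ⊤ →L[ℝ] StrongDual ℝ F),
      (∀ x : E, T x = R (S x)) ∧ ‖R‖ * ‖S‖ ≤ (Kf : ℝ) * (Kg : ℝ) := by
  classical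
  let B : Set (StrongDual ℝ E) := Metric.closedBall 0 1
  let X := lp (fun _ : B => ℝ) ⊤
  haveI : Nonempty E := ⟨0⟩
  -- the canonical embedding
  have hmem : ∀ x : E, Memℓp (fun x' : B => x'.1 x) ⊤ := by
    intro x
    apply memℓp_infty
    refine ⟨‖x‖, ?_⟩
    rintro - ⟨x', rfl⟩
    have hx' : ‖x'.1‖ ≤ 1 := mem_closedBall_zero_iff.1 x'.2
    calc ‖x'.1 x‖ ≤ ‖x'.1‖ * ‖x‖ := (x'.1).le_opNorm x
      _ ≤ 1 * ‖x‖ := by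
          exact mul_le_mul_of_nonneg_right hx' (norm_nonneg x)
      _ = ‖x‖ := one_mul _
  let ιlin : E →ₗ[ℝ] X :=
    { toFun := fun x => ⟨fun x' => x'.1 x, hmem x⟩
      map_add' := fun x y => by
        apply Subtype.ext
        funext x'
        exact map_add x'.1 x y
      map_smul' := fun c x => by
        apply Subtype.ext
        funext x'
        exact map_smul x'.1 c x }
  have ιlin_apply : ∀ (x : E) (x' : B), (ιlin x : ∀ _ : B, ℝ) x' = x'.1 x := fun _ _ => rfl
  have hιbound : ∀ x : E, ‖ιlin x‖ ≤ 1 * ‖x‖ := by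
    intro x
    rw [one_mul]
    refine lp.norm_le_of_forall_le (norm_nonneg x) fun x' => ?_
    have hx' : ‖x'.1‖ ≤ 1 := mem_closedBall_zero_iff.1 x'.2
    calc ‖(ιlin x : ∀ _ : B, ℝ) x'‖ ≤ ‖x'.1‖ * ‖x‖ := (x'.1).le_opNorm x
      _ ≤ 1 * ‖x‖ := mul_le_mul_of_nonneg_right hx' (norm_nonneg x)
      _ = ‖x‖ := one_mul _
  let ι : E →L[ℝ] X := LinearMap.mkContinuous ιlin 1 hιbound
  have ι_apply : ∀ (x : E) (x' : B), (ι x : ∀ _ : B, ℝ) x' = x'.1 x := fun _ _ => rfl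
  have hiso : ∀ x : E, ‖ι x‖ = ‖x‖ := by
    intro x
    refine le_antisymm ((hιbound x).trans (one_mul ‖x‖).le) ?_
    rcases eq_or_ne x 0 with rfl | hx
    · rw [norm_zero]
      exact norm_nonneg _
    · obtain ⟨x', hx'norm, hx'eq⟩ := exists_dual_vector ℝ x (norm_ne_zero_iff.2 hx)
      have hx'B : x' ∈ B := mem_closedBall_zero_iff.2 (le_of_eq hx'norm)
      calc ‖x‖ = x' x := by exact_mod_cast hx'eq.symm
        _ ≤ |x' x| := le_abs_self _
        _ = ‖(ι x : ∀ _ : B, ℝ) ⟨x', hx'B⟩‖ := rfl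
        _ ≤ ‖ι x‖ := lp.norm_apply_le_norm ENNReal.top_ne_zero (ι x) ⟨x', hx'B⟩
  have hdistι : ∀ x y : E, dist (ι x) (ι y) = dist x y := by
    intro x y
    rw [dist_eq_norm, dist_eq_norm, ← map_sub, hiso]
  have hinj : Function.Injective (⇑ι) := by
    intro x y hxy
    have : dist x y = 0 := by rw [← hdistι, hxy, dist_self]
    exact dist_eq_zero.1 this
  have hleft : ∀ x : E, Function.invFun (⇑ι) (ι x) = x :=
    fun x => Function.leftInverse_invFun hinj x
  -- McShane extension of `f` along `ι`
  let Φ : X → X := fun h => f (Function.invFun (⇑ι) h)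
  have hΦlip : LipschitzOnWith Kf Φ (Set.range (⇑ι)) := by
    rw [lipschitzOnWith_iff_dist_le_mul]
    rintro - ⟨x, rfl⟩ - ⟨y, rfl⟩
    show dist (f (Function.invFun (⇑ι) (ι x))) (f (Function.invFun (⇑ι) (ι y))) ≤ _
    rw [hleft, hleft, hdistι]
    exact hf.dist_le_mul x y
  obtain ⟨ftil, hftil_lip, hftil_eq⟩ := hΦlip.extend_lp_infty
  have hftilι : ∀ x : E, ftil (ι x) = f x := by
    intro x
    have := hftil_eq (Set.mem_range_self x)
    rw [← this]
    show f (Function.invFun (⇑ι) (ι x)) = f x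
    rw [hleft]
  -- the Lipschitz map `G` extending `T`
  set K : ℝ := (Kf : ℝ) * (Kg : ℝ) with hK
  have hK0 : 0 ≤ K := mul_nonneg Kf.2 Kg.2
  let G : X → StrongDual ℝ F := fun h => g (ftil h)
  have hGι : ∀ x : E, G (ι x) = T x := by
    intro x
    show g (ftil (ι x)) = T x
    rw [hftilι, ← hT]
  have hGlip : ∀ (a b : X) (y : F), |G a y - G b y| ≤ K * ‖a - b‖ * ‖y‖ := by
    intro a b y
    have h1 : ‖G a - G b‖ ≤ K * ‖a - b‖ := by
      have h2 : dist (g (ftil a)) (g (ftil b)) ≤ Kg * dist (ftil a) (ftil b) :=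
        hg.dist_le_mul _ _
      have h3 : dist (ftil a) (ftil b) ≤ Kf * dist a b := hftil_lip.dist_le_mul a b
      have h4 : dist (g (ftil a)) (g (ftil b)) ≤ (Kg : ℝ) * ((Kf : ℝ) * dist a b) :=
        h2.trans (mul_le_mul_of_nonneg_left h3 Kg.2)
      calc ‖G a - G b‖ = dist (g (ftil a)) (g (ftil b)) := (dist_eq_norm _ _).symm
        _ ≤ (Kg : ℝ) * ((Kf : ℝ) * dist a b) := h4
        _ = K * ‖a - b‖ := by rw [hK, dist_eq_norm]; ring
    calc |G a y - G b y| = ‖(G a - G b) y‖ := by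
          rw [ContinuousLinearMap.sub_apply]; rfl
      _ ≤ ‖G a - G b‖ * ‖y‖ := (G a - G b).le_opNorm y
      _ ≤ K * ‖a - b‖ * ‖y‖ :=
          mul_le_mul_of_nonneg_right h1 (norm_nonneg y)
  obtain ⟨R, hRι, hRnorm⟩ := exists_linear_extension ι T G K hK0 hGlip hGι
  refine ⟨ι, R, fun x => (hRι x).symm, ?_⟩
  have hSnorm : ‖ι‖ ≤ 1 := LinearMap.mkContinuous_norm_le ιlin zero_le_one hιbound
  calc ‖R‖ * ‖ι‖ ≤ K * 1 := mul_le_mul hRnorm hSnorm (norm_nonneg _) hK0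
    _ = (Kf : ℝ) * (Kg : ℝ) := by rw [mul_one]
end

section
/- Let E, F be real Banach spaces, E₀ ⊆ E a closed subspace, and T : E₀ → F'' a bounded linear operator. Suppose for every finite-dimensional subspace G of E there exists R_G ∈ L(G, F'') with ‖R_G‖ ≤ C and R_G|_{G ∩ E₀} = T|_{G ∩ E₀}. Then there exists R ∈ L(E, F'') with ‖R‖ ≤ C and R|_{E₀} = T. -/
namespace NormedSpace

def Dual (𝕜 : Type*) [NontriviallyNormedField 𝕜] (E : Type*) [NormedAddCommGroup E] [NormedSpace 𝕜 E] : Type _ := E →L[𝕜] 𝕜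

noncomputable instance (𝕜 : Type*) [NontriviallyNormedField 𝕜] (E : Type*) [NormedAddCommGroup E] [NormedSpace 𝕜 E] : NormedAddCommGroup (Dual 𝕜 E) :=
  ContinuousLinearMap.toNormedAddCommGroup (𝕜 := 𝕜) (𝕜₂ := 𝕜) (E := E) (F := 𝕜) (σ₁₂ := RingHom.id 𝕜)

noncomputable instance (𝕜 : Type*) [NontriviallyNormedField 𝕜] (E : Type*) [NormedAddCommGroup E] [NormedSpace 𝕜 E] : NormedSpace 𝕜 (Dual 𝕜 E) :=
  ContinuousLinearMap.toNormedSpace (E := E) (F := 𝕜) (σ₁₂ := RingHom.id 𝕜)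

end NormedSpace

instance (𝕜 : Type*) [NontriviallyNormedField 𝕜] (E : Type*) [NormedAddCommGroup E] [NormedSpace 𝕜 E] : FunLike (NormedSpace.Dual 𝕜 E) E 𝕜 :=
  inferInstanceAs (FunLike (E →L[𝕜] 𝕜) E 𝕜)

instance (𝕜 : Type*) [NontriviallyNormedField 𝕜] (E : Type*) [NormedAddCommGroup E] [NormedSpace 𝕜 E] : ContinuousLinearMapClass (NormedSpace.Dual 𝕜 E) 𝕜 E 𝕜 :=
  inferInstanceAs (ContinuousLinearMapClass (E →L[𝕜] 𝕜) 𝕜 E 𝕜)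

open NormedSpace Filter Topology

section Aux

variable {E F : Type*} [NormedAddCommGroup E] [NormedSpace ℝ E]

/-- The directed set of finite-dimensional subspaces of `E`. -/
abbrev FDSub (E : Type*) [NormedAddCommGroup E] [NormedSpace ℝ E] :=
  {G : Subspace ℝ E // FiniteDimensional ℝ G}

noncomputable instance : SemilatticeSup (FDSub E) :=
  Subtype.semilatticeSup (fun G₁ G₂ h₁ h₂ => by
    haveI := h₁; haveI := h₂; exact Submodule.finiteDimensional_sup G₁ G₂)

instance : Nonempty (FDSub E) := ⟨⟨⊥, inferInstance⟩⟩

end Aux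

/-- Local-to-global extension: uniformly bounded extensions on all finite-dimensional
subspaces glue (via a weak-star ultrafilter limit) to a global bounded extension. -/
theorem stmt13 {E F : Type*} [NormedAddCommGroup E] [NormedSpace ℝ E] [CompleteSpace E]
    [NormedAddCommGroup F] [NormedSpace ℝ F] [CompleteSpace F]
    (E₀ : Subspace ℝ E) (hE₀ : IsClosed (E₀ : Set E))
    (T : E₀ →L[ℝ] Dual ℝ (Dual ℝ F)) (C : ℝ)
    (hloc : ∀ G : Subspace ℝ E, FiniteDimensional ℝ G →
      ∃ RG : G →L[ℝ] Dual ℝ (Dual ℝ F), ‖RG‖ ≤ C ∧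
        ∀ (x : E) (hxG : x ∈ G) (hx0 : x ∈ E₀), RG ⟨x, hxG⟩ = T ⟨x, hx0⟩) :
    ∃ R : E →L[ℝ] Dual ℝ (Dual ℝ F), ‖R‖ ≤ C ∧ ∀ x : E₀, R x = T x := by
  classical
  obtain ⟨R0, hR0, -⟩ := hloc ⊥ inferInstance
  have hC0 : 0 ≤ C := le_trans (ContinuousLinearMap.opNorm_nonneg R0) hR0
  choose Rc hRnorm hRext using fun i : FDSub E => hloc i.1 i.2
  set U : Ultrafilter (FDSub E) := Ultrafilter.of atTop with hU
  have hUle : (U : Filter (FDSub E)) ≤ atTop := Ultrafilter.of_le _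
  -- eventual membership
  have hmem : ∀ x : E, ∀ᶠ i in (U : Filter (FDSub E)), x ∈ i.1 := by
    intro x
    refine hUle ?_
    refine eventually_atTop.2 ⟨⟨Submodule.span ℝ {x}, inferInstance⟩, fun b hb => ?_⟩
    exact hb (Submodule.mem_span_singleton_self x)
  -- the approximating functions
  set g : FDSub E → E → Dual ℝ F → ℝ :=
    fun i x f => if h : x ∈ i.1 then Rc i ⟨x, h⟩ f else 0 with hg
  have hbd : ∀ (x : E) (f : Dual ℝ F),
      ∀ᶠ i in (U : Filter (FDSub E)), |g i x f| ≤ C * ‖x‖ * ‖f‖ := by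
    intro x f
    filter_upwards [hmem x] with i hi
    rw [hg]; simp only [dif_pos hi]
    calc |Rc i ⟨x, hi⟩ f| ≤ ‖Rc i ⟨x, hi⟩‖ * ‖f‖ := (Rc i ⟨x, hi⟩).le_opNorm f
      _ ≤ (‖Rc i‖ * ‖(⟨x, hi⟩ : i.1)‖) * ‖f‖ := by
          gcongr; exact (Rc i).le_opNorm _
      _ = ‖Rc i‖ * ‖x‖ * ‖f‖ := by rw [Submodule.norm_coe ⟨x, hi⟩]
      _ ≤ C * ‖x‖ * ‖f‖ := by gcongr; exact hRnorm i
  -- existence of limits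
  have key : ∀ (x : E) (f : Dual ℝ F),
      ∃ c : ℝ, Tendsto (fun i => g i x f) (U : Filter (FDSub E)) (𝓝 c) := by
    intro x f
    have h1 : (U.map (fun i => g i x f) : Filter ℝ) ≤
        Filter.principal (Set.Icc (-(C * ‖x‖ * ‖f‖)) (C * ‖x‖ * ‖f‖)) := by
      rw [le_principal_iff]
      exact (hbd x f).mono (fun i hi => abs_le.1 hi)
    obtain ⟨c, -, hc⟩ := (isCompact_Icc (a := -(C * ‖x‖ * ‖f‖))
      (b := C * ‖x‖ * ‖f‖)).ultrafilter_le_nhds (U.map (fun i => g i x f)) h1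
    exact ⟨c, hc⟩
  choose r hr using key
  -- basic properties of r
  have hrbd : ∀ (x : E) (f : Dual ℝ F), |r x f| ≤ C * ‖x‖ * ‖f‖ := fun x f =>
    le_of_tendsto ((hr x f).abs) (hbd x f)
  have hr_addf : ∀ (x : E) (f₁ f₂ : Dual ℝ F), r x (f₁ + f₂) = r x f₁ + r x f₂ := by
    intro x f₁ f₂
    refine tendsto_nhds_unique (hr x (f₁ + f₂))
      (Tendsto.congr' ?_ ((hr x f₁).add (hr x f₂)))
    filter_upwards [hmem x] with i hi
    rw [hg]; simp [dif_pos hi]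
  have hr_smulf : ∀ (c : ℝ) (x : E) (f : Dual ℝ F), r x (c • f) = c • r x f := by
    intro c x f
    refine tendsto_nhds_unique (hr x (c • f))
      (Tendsto.congr' ?_ ((hr x f).const_smul c))
    filter_upwards [hmem x] with i hi
    rw [hg]; simp [dif_pos hi]
  have hr_addx : ∀ (x y : E) (f : Dual ℝ F), r (x + y) f = r x f + r y f := by
    intro x y f
    refine tendsto_nhds_unique (hr (x + y) f)
      (Tendsto.congr' ?_ ((hr x f).add (hr y f)))
    filter_upwards [hmem x, hmem y] with i hix hiy
    have hixy : x + y ∈ i.1 := add_mem hix hiy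
    rw [hg]
    simp only [dif_pos hix, dif_pos hiy, dif_pos hixy]
    have : (⟨x + y, hixy⟩ : i.1) = ⟨x, hix⟩ + ⟨y, hiy⟩ := rfl
    rw [this, map_add]; rfl
  have hr_smulx : ∀ (c : ℝ) (x : E) (f : Dual ℝ F), r (c • x) f = c • r x f := by
    intro c x f
    refine tendsto_nhds_unique (hr (c • x) f)
      (Tendsto.congr' ?_ ((hr x f).const_smul c))
    filter_upwards [hmem x] with i hix
    have hicx : c • x ∈ i.1 := Submodule.smul_mem _ c hix
    rw [hg]
    simp only [dif_pos hix, dif_pos hicx]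
    have : (⟨c • x, hicx⟩ : i.1) = c • ⟨x, hix⟩ := rfl
    rw [this, map_smul]; rfl
  have hr_ext : ∀ (x : E₀) (f : Dual ℝ F), r (x : E) f = T x f := by
    intro x f
    refine tendsto_nhds_unique (hr (x : E) f) ?_
    refine Tendsto.congr' ?_ tendsto_const_nhds
    filter_upwards [hmem (x : E)] with i hi
    rw [hg]
    simp only [dif_pos hi]
    rw [hRext i (x : E) hi x.2]
  -- assemble the bidual-valued map
  set A : E → Dual ℝ (Dual ℝ F) := fun x =>
    LinearMap.mkContinuous
      { toFun := fun f => r x f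
        map_add' := hr_addf x
        map_smul' := fun c f => hr_smulf c x f } (C * ‖x‖)
      (fun f => by
        rw [Real.norm_eq_abs]
        exact (hrbd x f).trans_eq (by ring)) with hA
  have hAapp : ∀ (x : E) (f : Dual ℝ F), A x f = r x f := fun x f => rfl
  set L : E →ₗ[ℝ] Dual ℝ (Dual ℝ F) :=
    { toFun := A
      map_add' := fun x y => ContinuousLinearMap.ext fun f => by
        exact hr_addx x y f
      map_smul' := fun c x => ContinuousLinearMap.ext fun f => by
        simp only [hAapp, RingHom.id_apply, ContinuousLinearMap.smul_apply]
        exact hr_smulx c x f } with hL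
  have hAle : ∀ x : E, ‖L x‖ ≤ C * ‖x‖ := fun x =>
    (A x).opNorm_le_bound (by positivity) (fun f => by
      change ‖r x f‖ ≤ _
      rw [Real.norm_eq_abs]
      exact (hrbd x f).trans_eq (by ring))
  refine ⟨L.mkContinuous C hAle, ?_, ?_⟩
  · exact (L.mkContinuous C hAle).opNorm_le_bound hC0 (fun x => by
      rw [LinearMap.mkContinuous_apply]; exact hAle x)
  · intro x
    refine ContinuousLinearMap.ext fun f => ?_
    simp only [LinearMap.mkContinuous_apply, hL, LinearMap.coe_mk, AddHom.coe_mk]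
    exact hr_ext x f
end
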